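/- arXiv:1912.12850 — 8 statements merged into one kernel-verified Lean document; each statement's English description precedes it below -/
import Mathlib

section
/- Let n, d, s, r be positive integers with d^s dividing n and (r, d^s)_s = 1. Then the number of elements of the set A = {r + t·d^s : t = 1, 2, ..., n/d^s} satisfying (r + t·d^s, n)_s = 1 equals Φ_s(n) / Φ_s(d^s) (in particular Φ_s(d^s) divides Φ_s(n) under these hypotheses). -/
/-- The generalized gcd of a nonnegative integer `n` at level `s`: the largest
`s`-th power `l ^ s` (with `l ≥ 1`) dividing `n`.  Applying it to `n = gcd(a, b)`
gives the generalized gcd `(a, b)_s` of the paper. -/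
def sPowGcd (s n : ℕ) : ℕ := (Nat.findGreatest (fun l => l ^ s ∣ n) n) ^ s

/-- Klee's function `Φ_s(n)`: the number of `1 ≤ m ≤ n` with `(m, n)_s = 1`. -/
def klee (s n : ℕ) : ℕ :=
  ((Finset.Icc 1 n).filter (fun m => sPowGcd s (Nat.gcd m n) = 1)).card

lemma sPowGcd_eq_one_iff {s g : ℕ} (hs : 0 < s) (hg : 0 < g) :
    sPowGcd s g = 1 ↔ ∀ p : ℕ, p.Prime → ¬ p ^ s ∣ g := by
  have h2 : 1 ≤ Nat.findGreatest (fun l => l ^ s ∣ g) g :=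
    Nat.le_findGreatest hg (by simp)
  unfold sPowGcd
  constructor
  · intro h p hp hpd
    have h1 : Nat.findGreatest (fun l => l ^ s ∣ g) g = 1 :=
      (pow_eq_one_iff.mp h).resolve_right hs.ne'
    have hple : p ≤ g := le_trans (Nat.le_self_pow hs.ne' p) (Nat.le_of_dvd hg hpd)
    have := Nat.le_findGreatest (P := fun l => l ^ s ∣ g) hple hpd
    have := hp.two_le
    omega
  · intro h
    have h1 : Nat.findGreatest (fun l => l ^ s ∣ g) g ≤ 1 := by
      by_contra hgt
      push_neg at hgt
      have hl : (Nat.findGreatest (fun l => l ^ s ∣ g) g) ^ s ∣ g :=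
        Nat.findGreatest_spec (P := fun l => l ^ s ∣ g) hg (by simp)
      obtain ⟨p, hp, hpdvd⟩ := Nat.exists_prime_and_dvd (by omega :
        Nat.findGreatest (fun l => l ^ s ∣ g) g ≠ 1)
      exact h p hp ((pow_dvd_pow_of_dvd hpdvd s).trans hl)
    have : Nat.findGreatest (fun l => l ^ s ∣ g) g = 1 := le_antisymm h1 h2
    simp [this]

/-- `m` has no common `s`-th power divisor `> 1` with `n`. -/
def goodN (s n m : ℕ) : Prop := ∀ p : ℕ, p.Prime → p ^ s ∣ n → ¬ p ^ s ∣ m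

noncomputable instance (s n m : ℕ) : Decidable (goodN s n m) := Classical.dec _

lemma key {s n : ℕ} (m : ℕ) (hs : 0 < s) (hn : 0 < n) :
    sPowGcd s (Nat.gcd m n) = 1 ↔ goodN s n m := by
  rw [sPowGcd_eq_one_iff hs (Nat.gcd_pos_of_pos_right m hn)]
  unfold goodN
  constructor
  · intro h p hp hpn hpm
    exact h p hp (Nat.dvd_gcd hpm hpn)
  · intro h p hp hpg
    exact h p hp (hpg.trans (Nat.gcd_dvd_right m n)) (hpg.trans (Nat.gcd_dvd_left m n))

lemma goodN_congr {s n m m' : ℕ} (h : m ≡ m' [MOD n]) : goodN s n m ↔ goodN s n m' := by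
  have key : ∀ {a b : ℕ}, a ≡ b [MOD n] → goodN s n a → goodN s n b := by
    intro a b hab hg p hp hpn hpb
    have : a ≡ b [MOD p ^ s] := hab.of_dvd hpn
    exact hg p hp hpn ((Nat.modEq_zero_iff_dvd).1 (this.trans ((Nat.modEq_zero_iff_dvd).2 hpb)))
  exact ⟨key h, key h.symm⟩
lemma klee_eq_card_zmod (s n : ℕ) [NeZero n] (hs : 0 < s) (hn : 0 < n) :
    klee s n = (Finset.univ.filter (fun x : ZMod n => goodN s n x.val)).card := by
  unfold klee
  apply Finset.card_bij' (i := fun (m : ℕ) _ => (m : ZMod n))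
    (j := fun (x : ZMod n) _ => if x.val = 0 then n else x.val)
  · intro m hm
    simp only [Finset.mem_filter, Finset.mem_Icc] at hm
    simp only [Finset.mem_filter, Finset.mem_univ, true_and]
    rw [ZMod.val_natCast]
    exact (goodN_congr (Nat.mod_modEq m n)).2 ((key m hs hn).1 hm.2)
  · intro x hx
    simp only [Finset.mem_filter, Finset.mem_univ, true_and] at hx
    have hlt := ZMod.val_lt x
    simp only [Finset.mem_filter, Finset.mem_Icc]
    constructor
    · split <;> omega
    · rw [key _ hs hn]
      split
      · exact (goodN_congr (Nat.modEq_zero_iff_dvd.2 dvd_rfl)).2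
          ((goodN_congr (by rw [‹x.val = 0›] : x.val ≡ 0 [MOD n])).1 hx)
      · exact hx
  · intro m hm
    simp only [Finset.mem_filter, Finset.mem_Icc] at hm
    rw [ZMod.val_natCast]
    rcases eq_or_lt_of_le hm.1.2 with h | h
    · simp [h, Nat.mod_self]
    · rw [Nat.mod_eq_of_lt h]
      have : m ≠ 0 := by omega
      simp [this]
  · intro x hx
    split
    · simp only [ZMod.natCast_self]
      exact ((ZMod.val_eq_zero x).1 ‹x.val = 0›).symm
    · exact ZMod.natCast_rightInverse x
lemma klee_eq_card_range (s D : ℕ) (hs : 0 < s) (hD : 0 < D) :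
    klee s D = ((Finset.range D).filter (fun m => goodN s D m)).card := by
  unfold klee
  apply Finset.card_bij' (i := fun (m : ℕ) _ => m % D)
    (j := fun (m : ℕ) _ => if m = 0 then D else m)
  · intro m hm
    simp only [Finset.mem_filter, Finset.mem_Icc] at hm
    simp only [Finset.mem_filter, Finset.mem_range]
    exact ⟨Nat.mod_lt _ hD, (goodN_congr (Nat.mod_modEq m D)).2 ((key m hs hD).1 hm.2)⟩
  · intro m hm
    simp only [Finset.mem_filter, Finset.mem_range] at hm
    simp only [Finset.mem_filter, Finset.mem_Icc]
    refine ⟨by split <;> omega, ?_⟩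
    rw [key _ hs hD]
    split
    · exact (goodN_congr ((Nat.modEq_zero_iff_dvd).2 dvd_rfl)).2
        ((goodN_congr (by rw [‹m = 0›] : m ≡ 0 [MOD D])).1 hm.2)
    · exact hm.2
  · intro m hm
    simp only [Finset.mem_filter, Finset.mem_Icc] at hm
    rcases eq_or_lt_of_le hm.1.2 with h | h
    · subst h; simp [Nat.mod_self]
    · rw [Nat.mod_eq_of_lt h]
      have : m ≠ 0 := by omega
      simp [this]
  · intro m hm
    simp only [Finset.mem_filter, Finset.mem_range] at hm
    split <;> rename_i h
    · rw [Nat.mod_self]; omega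
    · exact Nat.mod_eq_of_lt hm.1

lemma count_AP (n D s r : ℕ) [NeZero n] (hs : 0 < s) (hn : 0 < n) (hD : 0 < D)
    (hdvd : D ∣ n) :
    ((Finset.Icc 1 (n / D)).filter
        (fun t => sPowGcd s (Nat.gcd (r + t * D) n) = 1)).card
    = (Finset.univ.filter
        (fun x : ZMod n => x.val % D = r % D ∧ goodN s n x.val)).card := by
  have hQD : n / D * D = n := Nat.div_mul_cancel hdvd
  have hQpos : 0 < n / D := Nat.div_pos (Nat.le_of_dvd hn hdvd) hD
  set Q := n / D with hQdef
  -- facts about y = x - r, reused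
  have ydvd : ∀ x : ZMod n, x.val % D = r % D → D ∣ (x - (r : ZMod n)).val := by
    intro x hx1
    set y := x - (r : ZMod n) with hy
    have hxy : x = y + (r : ZMod n) := by rw [hy]; ring
    have hxv : x.val = (y.val + r) % n := by
      conv_lhs => rw [hxy]
      rw [show y + ((r : ℕ) : ZMod n) = ((y.val + r : ℕ) : ZMod n) by
        push_cast [ZMod.natCast_val, ZMod.cast_id]; ring, ZMod.val_natCast]
    have h1 : x.val ≡ y.val + r [MOD D] := by
      rw [hxv]; exact (Nat.mod_modEq _ n).of_dvd hdvd
    have h3 : x.val ≡ r [MOD D] := by simpa [Nat.ModEq] using hx1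
    have h4 : y.val + r ≡ 0 + r [MOD D] := by simpa using (h1.symm.trans h3)
    exact (Nat.modEq_zero_iff_dvd).1 (Nat.ModEq.add_right_cancel' r h4)
  have xmod : ∀ x : ZMod n, x.val ≡ (x - (r : ZMod n)).val + r [MOD n] := by
    intro x
    set y := x - (r : ZMod n) with hy
    have hxy : x = y + (r : ZMod n) := by rw [hy]; ring
    have hxv : x.val = (y.val + r) % n := by
      conv_lhs => rw [hxy]
      rw [show y + ((r : ℕ) : ZMod n) = ((y.val + r : ℕ) : ZMod n) by
        push_cast [ZMod.natCast_val, ZMod.cast_id]; ring, ZMod.val_natCast]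
    rw [hxv]; exact (Nat.mod_modEq _ n)
  apply Finset.card_bij' (i := fun (t : ℕ) _ => ((r + t * D : ℕ) : ZMod n))
    (j := fun (x : ZMod n) _ =>
      if ((x - (r : ZMod n)).val / D) = 0 then n / D else (x - (r : ZMod n)).val / D)
  · intro t ht
    simp only [Finset.mem_filter, Finset.mem_Icc] at ht
    simp only [Finset.mem_filter, Finset.mem_univ, true_and]
    rw [ZMod.val_natCast]
    constructor
    · have h1 : (r + t * D) % n ≡ r + t * D [MOD D] :=
        ((Nat.mod_modEq (r + t * D) n).of_dvd hdvd)
      have h2 : r + t * D ≡ r + 0 [MOD D] :=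
        Nat.ModEq.add_left r ((Nat.modEq_zero_iff_dvd).2 (dvd_mul_left D t))
      have h3 := h1.trans h2
      simpa [Nat.ModEq] using h3
    · exact (goodN_congr (Nat.mod_modEq _ n)).2 ((key _ hs hn).1 ht.2)
  · intro x hx
    simp only [Finset.mem_filter, Finset.mem_univ, true_and] at hx
    have hyval : D ∣ (x - (r : ZMod n)).val := ydvd x hx.1
    have hmu : (x - (r : ZMod n)).val / D * D = (x - (r : ZMod n)).val :=
      Nat.div_mul_cancel hyval
    have hult : (x - (r : ZMod n)).val / D < n / D :=
      Nat.div_lt_div_of_lt_of_dvd hdvd (ZMod.val_lt _)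
    set u := (x - (r : ZMod n)).val / D with hu
    clear_value u
    simp only [Finset.mem_filter, Finset.mem_Icc]
    refine ⟨by split <;> omega, ?_⟩
    rw [key _ hs hn]
    have harith : ∀ t0 : ℕ, t0 * D ≡ (x - (r : ZMod n)).val [MOD n] →
        goodN s n (r + t0 * D) := by
      intro t0 h0
      have : r + t0 * D ≡ x.val [MOD n] :=
        (Nat.ModEq.add_left r h0).trans (by simpa [Nat.add_comm] using (xmod x).symm)
      exact (goodN_congr this).2 hx.2
    split <;> rename_i h0
    · apply harith
      have hy0 : (x - (r : ZMod n)).val = 0 := by rw [← hmu, h0, zero_mul]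
      rw [hQD, hy0]
      exact (Nat.modEq_zero_iff_dvd).2 dvd_rfl
    · apply harith
      rw [hmu]
  · intro t ht
    simp only [Finset.mem_filter, Finset.mem_Icc] at ht
    have hyt : ((r + t * D : ℕ) : ZMod n) - (r : ZMod n) = ((t * D : ℕ) : ZMod n) := by
      push_cast; ring
    rw [hyt, ZMod.val_natCast]
    rcases eq_or_lt_of_le ht.1.2 with h | h
    · subst h
      rw [hQD, Nat.mod_self, Nat.zero_div]
      simp
      exact hQdef.symm
    · have hlt : t * D < n := by
        rw [← hQD]
        exact Nat.mul_lt_mul_of_lt_of_le h le_rfl hD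
      rw [Nat.mod_eq_of_lt hlt, Nat.mul_div_cancel t hD]
      have ht0 : t ≠ 0 := by omega
      simp [ht0]
  · intro x hx
    simp only [Finset.mem_filter, Finset.mem_univ, true_and] at hx
    have hyval : D ∣ (x - (r : ZMod n)).val := ydvd x hx.1
    have hmu : (x - (r : ZMod n)).val / D * D = (x - (r : ZMod n)).val :=
      Nat.div_mul_cancel hyval
    have hxy : x = (x - (r : ZMod n)) + (r : ZMod n) := by ring
    split <;> rename_i h0
    · have hy0 : (x - (r : ZMod n)).val = 0 := by
        rw [← hmu, h0, zero_mul]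
      have hyz : x - (r : ZMod n) = 0 := (ZMod.val_eq_zero _).1 hy0
      have : x = (r : ZMod n) := by rw [hxy, hyz, zero_add]
      rw [this]
      push_cast [hQD]
      simp
      rw [← Nat.cast_mul, Nat.div_mul_cancel hdvd, ZMod.natCast_self]
    · rw [show ((r + (x - (r : ZMod n)).val / D * D : ℕ) : ZMod n)
          = (r : ZMod n) + (((x - (r : ZMod n)).val / D * D : ℕ) : ZMod n) by push_cast; ring]
      rw [hmu, ZMod.natCast_val, ZMod.cast_id]
      ring
lemma fiber_le (n d s : ℕ) [NeZero n] (hs : 0 < s) (hn : 0 < n) (hd : 0 < d)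
    (hdvd : d ^ s ∣ n) (r1' r2' : ℕ)
    (hg1 : goodN s (d ^ s) r1') (hg2 : goodN s (d ^ s) r2')
    (hlt1 : r1' < d ^ s) (hlt2 : r2' < d ^ s) :
    (Finset.univ.filter
        (fun x : ZMod n => x.val % d ^ s = r1' ∧ goodN s n x.val)).card
    ≤ (Finset.univ.filter
        (fun x : ZMod n => x.val % d ^ s = r2' ∧ goodN s n x.val)).card := by
  set D := d ^ s with hDdef
  have hD : 0 < D := pow_pos hd s
  set S : Finset ℕ := n.primeFactors.filter (fun p => p ^ s ∣ n ∧ ¬ p ∣ d) with hSdef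
  set N2 : ℕ := ∏ p ∈ S, p ^ s with hN2def
  have hcop : Nat.Coprime D N2 := by
    apply Nat.Coprime.prod_right
    intro p hp
    rw [hSdef, Finset.mem_filter] at hp
    have hpp : p.Prime := Nat.prime_of_mem_primeFactors hp.1
    have : Nat.Coprime p d := (Nat.Prime.coprime_iff_not_dvd hpp).2 hp.2.2
    exact Nat.Coprime.pow s s this.symm
  obtain ⟨k, hk1, hk2⟩ := Nat.chineseRemainder hcop (r2' + D - r1') 0
  have hN2k : N2 ∣ k := (Nat.modEq_zero_iff_dvd).1 hk2
  -- the shift map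
  have hvadd : ∀ x : ZMod n, (x + (k : ZMod n)).val ≡ x.val + k [MOD n] := by
    intro x
    have : x + (k : ZMod n) = ((x.val + k : ℕ) : ZMod n) := by
      push_cast [ZMod.natCast_val, ZMod.cast_id]
      ring
    rw [this, ZMod.val_natCast]
    exact Nat.mod_modEq _ n
  apply Finset.card_le_card_of_injOn (fun x => x + (k : ZMod n))
  · intro x hx
    simp only [Finset.mem_coe, Finset.mem_filter, Finset.mem_univ, true_and] at hx ⊢
    have hmodD : (x + (k : ZMod n)).val ≡ x.val + k [MOD D] :=
      (hvadd x).of_dvd hdvd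
    have hx1 : x.val ≡ r1' [MOD D] := by
      have := hx.1
      simpa [Nat.ModEq, Nat.mod_eq_of_lt hlt1] using this
    have hkD : k ≡ r2' + D - r1' [MOD D] := hk1
    have hsum : x.val + k ≡ r1' + (r2' + D - r1') [MOD D] := hx1.add hkD
    have heq : r1' + (r2' + D - r1') = r2' + D := by omega
    have hres : (x + (k : ZMod n)).val ≡ r2' [MOD D] := by
      have h5 : (x + (k : ZMod n)).val ≡ r2' + D [MOD D] := by
        rw [← heq]; exact hmodD.trans hsum
      have h6 : r2' + D ≡ r2' + 0 [MOD D] :=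
        Nat.ModEq.add_left r2' ((Nat.modEq_zero_iff_dvd).2 dvd_rfl)
      simpa using h5.trans h6
    constructor
    · have : (x + (k : ZMod n)).val % D = r2' % D := hres
      rwa [Nat.mod_eq_of_lt hlt2] at this
    · intro p hp hpn hpdvd
      by_cases hpd : p ∣ d
      · have hpD : p ^ s ∣ D := pow_dvd_pow_of_dvd hpd s
        have h7 : (x + (k : ZMod n)).val ≡ r2' [MOD p ^ s] := hres.of_dvd hpD
        have h8 : p ^ s ∣ r2' := (Nat.modEq_zero_iff_dvd).1
          (h7.symm.trans ((Nat.modEq_zero_iff_dvd).2 hpdvd))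
        exact hg2 p hp hpD h8
      · have hpS : p ∈ S := by
          rw [hSdef, Finset.mem_filter, Nat.mem_primeFactors]
          exact ⟨⟨hp, (dvd_pow_self p hs.ne').trans hpn, hn.ne'⟩, hpn, hpd⟩
        have hpk : p ^ s ∣ k := ((Finset.dvd_prod_of_mem (fun p => p ^ s) hpS).trans
          (dvd_refl N2)).trans hN2k
        have h9 : (x + (k : ZMod n)).val ≡ x.val + k [MOD p ^ s] := (hvadd x).of_dvd hpn
        have h10 : x.val + k ≡ x.val + 0 [MOD p ^ s] :=
          Nat.ModEq.add_left _ ((Nat.modEq_zero_iff_dvd).2 hpk)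
        have h11 : p ^ s ∣ x.val := by
          have := (h9.trans h10).symm.trans ((Nat.modEq_zero_iff_dvd).2 hpdvd)
          simpa using (Nat.modEq_zero_iff_dvd).1 this
        exact hx.2 p hp hpn h11
  · intro a _ b _ hab
    simpa using congrArg (fun z => z - (k : ZMod n)) hab

theorem stmt_0 (n d s r : ℕ) (hn : 0 < n) (hd : 0 < d) (hs : 0 < s) (hr : 0 < r)
    (hdvd : d ^ s ∣ n) (hrd : sPowGcd s (Nat.gcd r (d ^ s)) = 1) :
    klee s (d ^ s) ∣ klee s n ∧
    ((Finset.Icc 1 (n / d ^ s)).filter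
        (fun t => sPowGcd s (Nat.gcd (r + t * d ^ s) n) = 1)).card
      = klee s n / klee s (d ^ s) := by
  haveI : NeZero n := ⟨hn.ne'⟩
  set D := d ^ s with hDdef
  have hD : 0 < D := pow_pos hd s
  -- the fiber of a residue class
  set fib : ℕ → Finset (ZMod n) := fun r' =>
    Finset.univ.filter (fun x : ZMod n => x.val % D = r' ∧ goodN s n x.val) with hfibdef
  -- goodness of r mod D
  have hgood_r : goodN s D (r % D) :=
    (goodN_congr (Nat.mod_modEq r D)).2 ((key r hs hD).1 hrd)
  have hrD : r % D < D := Nat.mod_lt _ hD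
  -- the count in the statement equals the fiber of r % D
  have hcount : ((Finset.Icc 1 (n / D)).filter
        (fun t => sPowGcd s (Nat.gcd (r + t * D) n) = 1)).card = (fib (r % D)).card := by
    rw [hfibdef]
    simpa using count_AP n D s r hs hn hD hdvd
  -- all good fibers have the same cardinality
  have hconst : ∀ r' : ℕ, r' < D → goodN s D r' → (fib r').card = (fib (r % D)).card := by
    intro r' hlt hgr
    exact le_antisymm
      (fiber_le n d s hs hn hd hdvd r' (r % D) hgr hgood_r hlt hrD)
      (fiber_le n d s hs hn hd hdvd (r % D) r' hgood_r hgr hrD hlt)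
  -- bad fibers are empty
  have hzero : ∀ r' : ℕ, ¬ goodN s D r' → (fib r').card = 0 := by
    intro r' hbad
    rw [Finset.card_eq_zero, hfibdef]
    rw [Finset.filter_eq_empty_iff]
    rintro x -
    rintro ⟨hx1, hx2⟩
    apply hbad
    intro p hp hpD hpr
    have hxr : x.val ≡ r' [MOD p ^ s] := by
      have : x.val ≡ r' [MOD D] := by
        rcases Nat.lt_or_ge r' D with h | h
        · simpa [Nat.ModEq, Nat.mod_eq_of_lt h] using hx1
        · -- r' ≥ D : but x.val % D = r' < D, contradiction unless...
          have := Nat.mod_lt x.val hD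
          omega
      exact this.of_dvd hpD
    exact hx2 p hp (hpD.trans hdvd)
      ((Nat.modEq_zero_iff_dvd).1 (hxr.trans ((Nat.modEq_zero_iff_dvd).2 hpr)))
  -- decompose the good set fiberwise
  have hdecomp : klee s n = ∑ r' ∈ (Finset.range D).filter (fun m => goodN s D m),
      (fib r').card := by
    rw [klee_eq_card_zmod s n hs hn]
    rw [Finset.card_eq_sum_card_fiberwise
      (f := fun x : ZMod n => x.val % D) (t := Finset.range D)
      (fun x _ => Finset.mem_range.2 (Nat.mod_lt _ hD))]
    rw [Finset.sum_filter_of_ne]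
    · apply Finset.sum_congr rfl
      intro r' _
      congr 1
      rw [hfibdef]
      rw [Finset.filter_filter]
      apply Finset.filter_congr
      intro x _
      tauto
    · intro r' _ hne
      by_contra hbad
      exact hne (hzero r' hbad)
  have hsum : klee s n = klee s D * (fib (r % D)).card := by
    rw [hdecomp, klee_eq_card_range s D hs hD, Finset.card_eq_sum_ones, Finset.sum_mul]
    apply Finset.sum_congr rfl
    intro r' hr'
    simp only [Finset.mem_filter, Finset.mem_range] at hr'
    rw [one_mul]
    exact hconst r' hr'.1 hr'.2
  have hklee_pos : 0 < klee s D := by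
    rw [klee_eq_card_range s D hs hD]
    apply Finset.card_pos.2
    exact ⟨r % D, Finset.mem_filter.2 ⟨Finset.mem_range.2 hrD, hgood_r⟩⟩
  constructor
  · exact ⟨(fib (r % D)).card, hsum⟩
  · rw [hcount, hsum, Nat.mul_div_cancel_left _ hklee_pos]
end

section
/- Let k, r be positive integers and let n be a positive integer with prime factorization n = p_1^{t_1} p_2^{t_2} ··· p_q^{t_q}. Then Σ_{d | n} d^r · (φ(n)/φ(n/d))^{k−1} = Π_{i=1}^{q} ( φ(p_i^{t_i})^{k−1} · p_i^{t_i r} − p_i^{t_i(k+r−1)} + σ_{k+r−1}(p_i^{t_i}) ), where the sum is over all positive divisors d of n and σ_m(x) = Σ_{e | x} e^m is the sum of m-th powers of the divisors of x. -/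
open ArithmeticFunction Finset

/-- φ^k as an arithmetic function into ℚ. -/
def phiPowQ (k : ℕ) : ArithmeticFunction ℚ :=
  ⟨fun n => if n = 0 then 0 else (n.totient : ℚ) ^ k, by simp⟩

lemma phiPowQ_apply {k n : ℕ} (hn : n ≠ 0) : phiPowQ k n = (n.totient : ℚ) ^ k := if_neg hn

lemma phiPowQ_ne_zero {k n : ℕ} (hn : n ≠ 0) : phiPowQ k n ≠ 0 := by
  rw [phiPowQ_apply hn]
  exact pow_ne_zero _ (Nat.cast_ne_zero.2 (Nat.totient_pos.2 (Nat.pos_of_ne_zero hn)).ne')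

lemma isMultiplicative_phiPowQ (k : ℕ) : (phiPowQ k).IsMultiplicative := by
  rw [IsMultiplicative.iff_ne_zero]
  refine ⟨by simp [phiPowQ], fun {m n} hm hn hcop => ?_⟩
  rw [phiPowQ_apply hm, phiPowQ_apply hn, phiPowQ_apply (mul_ne_zero hm hn),
    Nat.totient_mul hcop]
  push_cast
  ring

/-- The main arithmetic function. -/
def Fq (k r : ℕ) : ArithmeticFunction ℚ :=
  (phiPowQ (k - 1)).pmul
    ((↑(ArithmeticFunction.pow r) : ArithmeticFunction ℚ) *
      ((↑(ArithmeticFunction.zeta : ArithmeticFunction ℕ) : ArithmeticFunction ℚ).pdiv (phiPowQ (k - 1))))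

lemma isMultiplicative_Fq (k r : ℕ) : (Fq k r).IsMultiplicative :=
  (isMultiplicative_phiPowQ _).pmul
    ((isMultiplicative_pow.natCast).mul
      ((isMultiplicative_zeta.natCast).pdiv (isMultiplicative_phiPowQ _)))

lemma Fq_apply (k r n : ℕ) (hn : n ≠ 0) :
    Fq k r n = ∑ d ∈ n.divisors, (d : ℚ) ^ r *
      ((Nat.totient n : ℚ) / (Nat.totient (n / d) : ℚ)) ^ (k - 1) := by
  rw [Fq, pmul_apply, mul_apply, Nat.sum_divisorsAntidiagonal
    (f := fun d e => ((pow r : ArithmeticFunction ℕ) : ArithmeticFunction ℚ) d *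
      (((ArithmeticFunction.zeta : ArithmeticFunction ℕ) : ArithmeticFunction ℚ).pdiv (phiPowQ (k - 1))) e),
    Finset.mul_sum]
  refine Finset.sum_congr rfl fun d hd => ?_
  obtain ⟨hdvd, -⟩ := Nat.mem_divisors.1 hd
  have hd0 : d ≠ 0 := fun h => hn (by simpa [h] using hdvd)
  have hnd0 : n / d ≠ 0 := Nat.div_ne_zero_iff.2 ⟨hd0, Nat.le_of_dvd (Nat.pos_of_ne_zero hn) hdvd⟩
  rw [pdiv_apply, natCoe_apply, natCoe_apply, zeta_apply_ne hnd0, pow_apply, if_neg (fun h => hd0 h.2),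
    phiPowQ_apply hn, phiPowQ_apply hnd0, div_pow]
  push_cast
  ring

lemma totient_pp_factor {p : ℕ} (hp : p.Prime) {t i : ℕ} (hi : i < t) :
    Nat.totient (p ^ t) = p ^ i * Nat.totient (p ^ (t - i)) := by
  rw [Nat.totient_prime_pow hp (by omega), Nat.totient_prime_pow hp (by omega : 0 < t - i),
    ← mul_assoc, ← pow_add]
  congr 2
  omega

lemma Fq_prime_pow (k r p t : ℕ) (hk : 0 < k) (hp : p.Prime) (ht : 0 < t) :
    Fq k r (p ^ t) = (Nat.totient (p ^ t) : ℚ) ^ (k - 1) * (p : ℚ) ^ (t * r)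
      - (p : ℚ) ^ (t * (k + r - 1)) + (ArithmeticFunction.sigma (k + r - 1) (p ^ t) : ℚ) := by
  have hp0 : (p : ℕ) ≠ 0 := hp.pos.ne'
  rw [Fq_apply _ _ _ (pow_ne_zero _ hp0), Nat.sum_divisors_prime_pow hp, Finset.sum_range_succ]
  have htop : ((p ^ t : ℕ) : ℚ) ^ r * ((Nat.totient (p ^ t) : ℚ) /
      (Nat.totient (p ^ t / p ^ t) : ℚ)) ^ (k - 1)
      = (Nat.totient (p ^ t) : ℚ) ^ (k - 1) * (p : ℚ) ^ (t * r) := by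
    rw [Nat.div_self (pow_pos hp.pos t)]
    push_cast
    rw [Nat.totient_one]
    push_cast
    rw [div_one, ← pow_mul]
    ring
  rw [htop]
  have hrest : ∀ i ∈ Finset.range t, ((p ^ i : ℕ) : ℚ) ^ r * ((Nat.totient (p ^ t) : ℚ) /
      (Nat.totient (p ^ t / p ^ i) : ℚ)) ^ (k - 1) = (p : ℚ) ^ (i * (k + r - 1)) := by
    intro i hi
    rw [Finset.mem_range] at hi
    rw [Nat.pow_div (by omega) hp.pos, totient_pp_factor hp hi]
    have hne : ((Nat.totient (p ^ (t - i)) : ℚ)) ≠ 0 :=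
      Nat.cast_ne_zero.2 (Nat.totient_pos.2 (pow_pos hp.pos _)).ne'
    push_cast
    rw [mul_div_cancel_right₀ _ hne, ← pow_mul, ← pow_mul, ← pow_add]
    congr 1
    have := hk
    cases k with
    | zero => omega
    | succ k' =>
      have h1 : k' + 1 - 1 = k' := rfl
      have h2 : k' + 1 + r - 1 = k' + r := by omega
      rw [h1, h2]; ring
  rw [Finset.sum_congr rfl hrest, ArithmeticFunction.sigma_apply_prime_pow hp,
    Finset.sum_range_succ]
  push_cast
  ring

theorem stmt_3 (k r n : ℕ) (hk : 0 < k) (hr : 0 < r) (hn : 0 < n) :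
    (∑ d ∈ n.divisors, (d : ℚ) ^ r * ((Nat.totient n : ℚ) / (Nat.totient (n / d) : ℚ)) ^ (k - 1))
      = ∏ p ∈ n.primeFactors,
          ((Nat.totient (p ^ (n.factorization p)) : ℚ) ^ (k - 1) * (p : ℚ) ^ (n.factorization p * r)
            - (p : ℚ) ^ (n.factorization p * (k + r - 1))
            + (ArithmeticFunction.sigma (k + r - 1) (p ^ n.factorization p) : ℚ)) := by
  rw [← Fq_apply k r n hn.ne',
    (isMultiplicative_Fq k r).multiplicative_factorization _ hn.ne', Finsupp.prod]
  refine Finset.prod_congr n.support_factorization fun p hp => ?_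
  obtain ⟨hpp, hdvd, -⟩ := Nat.mem_primeFactors.1 hp
  exact Fq_prime_pow k r p _ hk hpp ((Nat.Prime.factorization_pos_of_dvd hpp hn.ne' hdvd))
end

section
/- Let k, r, n be positive integers and let a_1, ..., a_k be integers with gcd(a_i, n) = 1 for i = 1, ..., k. Then the sum of gcd(m_1 − a_1, m_2 − a_2, ..., m_k − a_k, b_1, ..., b_r, n), taken over all tuples with 1 ≤ m_i ≤ n satisfying gcd(m_i, n) = 1 for each i and all 1 ≤ b_j ≤ n for j = 1, ..., r, equals φ(n)^k · Σ_{d | n} d^r / φ(n/d)^{k−1}, where the sum on the right is over all positive divisors d of n. -/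
open Finset

-- fiber cardinality of surjective hom
lemma fiber_card {G H : Type*} [Group G] [Group H] (f : G →* H)
    (hf : Function.Surjective f) (y : H) :
    Nat.card {x : G // f x = y} * Nat.card H = Nat.card G := by
  obtain ⟨x0, hx0⟩ := hf y
  have e : {x : G // f x = y} ≃ f.ker :=
    { toFun := fun x => ⟨x0⁻¹ * x.1, by
        simp [MonoidHom.mem_ker, hx0, x.2]⟩
      invFun := fun z => ⟨x0 * z.1, by
        have := z.2
        simp only [MonoidHom.mem_ker] at this
        simp [this, hx0]⟩
      left_inv := fun x => by simp
      right_inv := fun z => by simp }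
  rw [Nat.card_congr e]
  have h1 := Subgroup.card_mul_index f.ker
  rw [Subgroup.index_ker] at h1
  have h2 : Nat.card f.range = Nat.card H :=
    Nat.card_congr (Equiv.subtypeUnivEquiv fun x => by
      simpa [MonoidHom.mem_range] using hf x)
  rwa [h2] at h1

lemma count_m (n e : ℕ) (hn : 0 < n) (he : e ∣ n) (a : ℤ) (ha : Int.gcd a n = 1) :
    ((Finset.Icc 1 n).filter
      (fun m => Nat.gcd m n = 1 ∧ (e : ℤ) ∣ ((m : ℤ) - a))).card * e.totient = n.totient := by
  haveI : NeZero n := ⟨hn.ne'⟩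
  have hepos : 0 < e := Nat.pos_of_dvd_of_pos he hn
  haveI : NeZero e := ⟨hepos.ne'⟩
  have hae : Int.gcd a e = 1 := by
    have h1 : Int.gcd a e ∣ Int.gcd a n := by
      simp only [Int.gcd, Int.natAbs_natCast]
      exact Nat.dvd_gcd (Nat.gcd_dvd_left _ _) ((Nat.gcd_dvd_right _ _).trans he)
    exact Nat.dvd_one.mp (ha ▸ h1)
  have hAunit : IsUnit ((a : ℤ) : ZMod e) := by
    obtain ⟨u, v, huv⟩ := Int.isCoprime_iff_gcd_eq_one.mpr hae
    refine IsUnit.of_mul_eq_one ((u : ℤ) : ZMod e) ?_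
    have h2 : (((u * a + v * e : ℤ)) : ZMod e) = ((1 : ℤ) : ZMod e) := by rw [huv]
    push_cast at h2
    rw [ZMod.natCast_self] at h2
    rw [mul_comm]
    simpa using h2
  have stepA : ((Finset.Icc 1 n).filter
      (fun m => Nat.gcd m n = 1 ∧ (e : ℤ) ∣ ((m : ℤ) - a))).card
      = (Finset.univ.filter (fun x : ZMod n =>
          IsUnit x ∧ ZMod.castHom he (ZMod e) x = ((a : ℤ) : ZMod e))).card := by
    apply Finset.card_bij' (fun m _ => ((m : ℕ) : ZMod n))
      (fun x _ => if x.val = 0 then n else x.val)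
    · intro m hm
      simp only [Finset.mem_filter, Finset.mem_Icc] at hm
      obtain ⟨⟨hm1, hm2⟩, hg, hd⟩ := hm
      simp only [Finset.mem_filter, Finset.mem_univ, true_and]
      refine ⟨(ZMod.isUnit_iff_coprime m n).mpr hg, ?_⟩
      rw [map_natCast]
      have h3 : (((m : ℤ) - a : ℤ) : ZMod e) = 0 :=
        (ZMod.intCast_zmod_eq_zero_iff_dvd _ _).mpr hd
      push_cast at h3
      rw [sub_eq_zero] at h3
      push_cast
      exact h3
    · intro x hx
      simp only [Finset.mem_filter, Finset.mem_univ, true_and] at hx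
      obtain ⟨hu, hc⟩ := hx
      have hxm : (((if x.val = 0 then n else x.val : ℕ)) : ZMod n) = x := by
        split
        · next h => rw [(ZMod.val_eq_zero x).mp h]; simp
        · exact ZMod.natCast_rightInverse x
      simp only [Finset.mem_filter, Finset.mem_Icc]
      refine ⟨⟨?_, ?_⟩, ?_, ?_⟩
      · split
        · exact hn
        · next h => omega
      · split
        · exact le_refl n
        · exact le_of_lt (ZMod.val_lt x)
      · apply (ZMod.isUnit_iff_coprime _ n).mp
        rw [hxm]; exact hu
      · have h6 : (((if x.val = 0 then n else x.val : ℕ)) : ZMod e) = ((a : ℤ) : ZMod e) := by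
          rw [← map_natCast (ZMod.castHom he (ZMod e)), hxm]; exact hc
        rw [← ZMod.intCast_zmod_eq_zero_iff_dvd, Int.cast_sub, sub_eq_zero, Int.cast_natCast]
        exact h6
    · intro m hm
      simp only [Finset.mem_filter, Finset.mem_Icc] at hm
      obtain ⟨⟨hm1, hm2⟩, _⟩ := hm
      rcases lt_or_eq_of_le hm2 with h | h
      · rw [ZMod.val_cast_of_lt h, if_neg (by omega)]
      · subst h
        simp [ZMod.natCast_self]
    · intro x hx
      split
      · next h => rw [(ZMod.val_eq_zero x).mp h]; simp
      · exact ZMod.natCast_rightInverse x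
  rw [stepA]
  let f := ZMod.unitsMap he
  have hf : Function.Surjective f := ZMod.unitsMap_surjective he
  have e1 : {x : ZMod n // IsUnit x ∧ ZMod.castHom he (ZMod e) x = ((a : ℤ) : ZMod e)}
      ≃ {u : (ZMod n)ˣ // f u = hAunit.unit} :=
    { toFun := fun x => ⟨x.2.1.unit, Units.ext (by
        show ((f x.2.1.unit : (ZMod e)ˣ) : ZMod e) = ((hAunit.unit : (ZMod e)ˣ) : ZMod e)
        rw [IsUnit.unit_spec]
        show (ZMod.castHom he (ZMod e)) (x.2.1.unit : ZMod n) = _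
        rw [IsUnit.unit_spec]
        exact x.2.2)⟩
      invFun := fun u => ⟨(u.1 : ZMod n), u.1.isUnit, by
        have h4 := congrArg (Units.val) u.2
        rw [IsUnit.unit_spec] at h4
        exact h4⟩
      left_inv := fun x => Subtype.ext x.2.1.unit_spec
      right_inv := fun u => Subtype.ext (Units.ext (by simp)) }
  have hcard : (Finset.univ.filter (fun x : ZMod n =>
      IsUnit x ∧ ZMod.castHom he (ZMod e) x = ((a : ℤ) : ZMod e))).card
      = Nat.card {u : (ZMod n)ˣ // f u = hAunit.unit} := by
    rw [← Nat.card_congr e1, Nat.card_eq_fintype_card, Fintype.card_subtype]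
  rw [hcard]
  have h5 := fiber_card f hf hAunit.unit
  rwa [Nat.card_eq_fintype_card (α := (ZMod e)ˣ), Nat.card_eq_fintype_card (α := (ZMod n)ˣ),
    ZMod.card_units_eq_totient, ZMod.card_units_eq_totient] at h5

lemma count_b (n e : ℕ) : ((Finset.Icc 1 n).filter (fun b => e ∣ b)).card = n / e := by
  rw [show Finset.Icc 1 n = Finset.Ioc 0 n from Finset.Icc_add_one_left_eq_Ioc 0 n]
  exact Nat.Ioc_filter_dvd_card_eq_div n e

lemma piFinset_filter_eq {ι : Type*} [Fintype ι] [DecidableEq ι] (s : Finset ℕ)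
    (p : ι → ℕ → Prop) [∀ i x, Decidable (p i x)] :
    (Fintype.piFinset fun _ : ι => s).filter (fun f => ∀ i, p i (f i))
      = Fintype.piFinset (fun i => s.filter (p i)) := by
  ext f
  simp [Fintype.mem_piFinset, Finset.mem_filter, forall_and]

theorem stmt_4 (k r n : ℕ) (hk : 0 < k) (hr : 0 < r) (hn : 0 < n)
    (a : Fin k → ℤ) (ha : ∀ i, Int.gcd (a i) (n : ℤ) = 1) :
    (∑ m ∈ (Fintype.piFinset fun _ : Fin k => Finset.Icc 1 n).filter
        (fun m => ∀ i, Nat.gcd (m i) n = 1),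
      ∑ b ∈ Fintype.piFinset fun _ : Fin r => Finset.Icc 1 n,
        (Nat.gcd (Finset.univ.gcd fun i => ((m i : ℤ) - a i).natAbs)
          (Nat.gcd (Finset.univ.gcd fun j => b j) n) : ℚ))
    = (Nat.totient n : ℚ) ^ k *
        ∑ d ∈ n.divisors, (d : ℚ) ^ r / (Nat.totient (n / d) : ℚ) ^ (k - 1) := by
  classical
  set M := (Fintype.piFinset fun _ : Fin k => Finset.Icc 1 n).filter
      (fun m => ∀ i, Nat.gcd (m i) n = 1) with hM
  set B := Fintype.piFinset fun _ : Fin r => Finset.Icc 1 n with hB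
  -- expansion of the gcd via totient sum
  have hg : ∀ (m : Fin k → ℕ) (b : Fin r → ℕ),
      Nat.gcd (Finset.univ.gcd fun i => ((m i : ℤ) - a i).natAbs)
        (Nat.gcd (Finset.univ.gcd fun j => b j) n)
      = ∑ e ∈ n.divisors, if (e ∣ Finset.univ.gcd (fun i => ((m i : ℤ) - a i).natAbs)
          ∧ e ∣ Finset.univ.gcd (fun j => b j)) then e.totient else 0 := by
    intro m b
    set g := Nat.gcd (Finset.univ.gcd fun i => ((m i : ℤ) - a i).natAbs)
        (Nat.gcd (Finset.univ.gcd fun j => b j) n) with hgdef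
    have hgn : g ∣ n := (Nat.gcd_dvd_right _ _).trans (Nat.gcd_dvd_right _ _)
    have hg0 : g ≠ 0 := fun h => hn.ne' (Nat.eq_zero_of_zero_dvd (h ▸ hgn))
    have hdiv : g.divisors = n.divisors.filter (· ∣ g) := by
      ext d
      simp only [Nat.mem_divisors, Finset.mem_filter]
      constructor
      · rintro ⟨hd, _⟩
        exact ⟨⟨hd.trans hgn, hn.ne'⟩, hd⟩
      · rintro ⟨⟨_, _⟩, hd⟩
        exact ⟨hd, hg0⟩
    have hsum := Nat.sum_totient g
    rw [hdiv, Finset.sum_filter] at hsum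
    rw [← hsum]
    refine Finset.sum_congr rfl fun e he => ?_
    have hen : e ∣ n := (Nat.mem_divisors.mp he).1
    have hiff : e ∣ g ↔ ((e ∣ Finset.univ.gcd (fun i => ((m i : ℤ) - a i).natAbs))
        ∧ e ∣ Finset.univ.gcd (fun j => b j)) := by
      constructor
      · intro heg
        exact ⟨heg.trans (Nat.gcd_dvd_left _ _),
          (heg.trans (Nat.gcd_dvd_right _ _)).trans (Nat.gcd_dvd_left _ _)⟩
      · rintro ⟨h1, h2⟩
        exact Nat.dvd_gcd h1 (Nat.dvd_gcd h2 hen)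
    simp only [hiff]
  -- nat-level computation
  have main_nat : (∑ m ∈ M, ∑ b ∈ B,
      Nat.gcd (Finset.univ.gcd fun i => ((m i : ℤ) - a i).natAbs)
        (Nat.gcd (Finset.univ.gcd fun j => b j) n))
      = ∑ e ∈ n.divisors,
          (∏ i : Fin k, ((Finset.Icc 1 n).filter
            (fun x => Nat.gcd x n = 1 ∧ (e : ℤ) ∣ ((x : ℤ) - a i))).card)
          * (e.totient * (n / e) ^ r) := by
    calc (∑ m ∈ M, ∑ b ∈ B, Nat.gcd (Finset.univ.gcd fun i => ((m i : ℤ) - a i).natAbs)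
        (Nat.gcd (Finset.univ.gcd fun j => b j) n))
        = ∑ m ∈ M, ∑ b ∈ B, ∑ e ∈ n.divisors,
            if (e ∣ Finset.univ.gcd (fun i => ((m i : ℤ) - a i).natAbs)
              ∧ e ∣ Finset.univ.gcd (fun j => b j)) then e.totient else 0 := by
          exact Finset.sum_congr rfl fun m _ => Finset.sum_congr rfl fun b _ => hg m b
      _ = ∑ e ∈ n.divisors, ∑ m ∈ M, ∑ b ∈ B,
            if (e ∣ Finset.univ.gcd (fun i => ((m i : ℤ) - a i).natAbs)
              ∧ e ∣ Finset.univ.gcd (fun j => b j)) then e.totient else 0 := by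
          rw [show (∑ m ∈ M, ∑ b ∈ B, ∑ e ∈ n.divisors,
              if (e ∣ Finset.univ.gcd (fun i => ((m i : ℤ) - a i).natAbs)
                ∧ e ∣ Finset.univ.gcd (fun j => b j)) then e.totient else 0)
              = ∑ m ∈ M, ∑ e ∈ n.divisors, ∑ b ∈ B,
              if (e ∣ Finset.univ.gcd (fun i => ((m i : ℤ) - a i).natAbs)
                ∧ e ∣ Finset.univ.gcd (fun j => b j)) then e.totient else 0
            from Finset.sum_congr rfl fun m _ => Finset.sum_comm]
          exact Finset.sum_comm
      _ = ∑ e ∈ n.divisors,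
            (∏ i : Fin k, ((Finset.Icc 1 n).filter
              (fun x => Nat.gcd x n = 1 ∧ (e : ℤ) ∣ ((x : ℤ) - a i))).card)
            * (e.totient * (n / e) ^ r) := by
          refine Finset.sum_congr rfl fun e he => ?_
          have : ∀ (m : Fin k → ℕ) (b : Fin r → ℕ),
              (if (e ∣ Finset.univ.gcd (fun i => ((m i : ℤ) - a i).natAbs)
                ∧ e ∣ Finset.univ.gcd (fun j => b j)) then e.totient else 0)
              = (if e ∣ Finset.univ.gcd (fun i => ((m i : ℤ) - a i).natAbs)
                  then e.totient else 0)
                * (if e ∣ Finset.univ.gcd (fun j => b j) then 1 else 0) := by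
            intro m b
            by_cases h1 : e ∣ Finset.univ.gcd (fun i => ((m i : ℤ) - a i).natAbs) <;>
              by_cases h2 : e ∣ Finset.univ.gcd (fun j => b j) <;> simp [h1, h2]
          simp_rw [this]
          rw [← Finset.sum_mul_sum]
          rw [← Finset.sum_filter, ← Finset.sum_filter, Finset.sum_const, Finset.sum_const,
            smul_eq_mul, smul_eq_mul, mul_one]
          have hMf : M.filter (fun m => e ∣ Finset.univ.gcd fun i => ((m i : ℤ) - a i).natAbs)
              = Fintype.piFinset (fun i => (Finset.Icc 1 n).filter
                  (fun x => Nat.gcd x n = 1 ∧ (e : ℤ) ∣ ((x : ℤ) - a i))) := by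
            ext f
            simp only [hM, Finset.mem_filter, Fintype.mem_piFinset, Finset.dvd_gcd_iff,
              Finset.mem_univ, true_implies, ← Int.natCast_dvd, forall_and]
            tauto
          have hBf : B.filter (fun b => e ∣ Finset.univ.gcd fun j => b j)
              = Fintype.piFinset (fun _ : Fin r => (Finset.Icc 1 n).filter (e ∣ ·)) := by
            ext f
            simp only [hB, Finset.mem_filter, Fintype.mem_piFinset, Finset.dvd_gcd_iff,
              Finset.mem_univ, true_implies, forall_and]
          rw [hMf, hBf, Fintype.card_piFinset, Fintype.card_piFinset]
          simp only [count_b]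
          rw [Finset.prod_const, Finset.card_univ, Fintype.card_fin]
          ring
  -- now pass to ℚ
  have cast_lhs : (∑ m ∈ M, ∑ b ∈ B,
      (Nat.gcd (Finset.univ.gcd fun i => ((m i : ℤ) - a i).natAbs)
        (Nat.gcd (Finset.univ.gcd fun j => b j) n) : ℚ))
      = ((∑ m ∈ M, ∑ b ∈ B,
        Nat.gcd (Finset.univ.gcd fun i => ((m i : ℤ) - a i).natAbs)
          (Nat.gcd (Finset.univ.gcd fun j => b j) n) : ℕ) : ℚ) := by
    push_cast
    rfl
  rw [cast_lhs, main_nat]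
  push_cast
  -- rewrite RHS via d ↦ n / d
  have rhs : (Nat.totient n : ℚ) ^ k *
      ∑ d ∈ n.divisors, (d : ℚ) ^ r / (Nat.totient (n / d) : ℚ) ^ (k - 1)
      = ∑ e ∈ n.divisors, (Nat.totient n : ℚ) ^ k *
          ((n / e : ℕ) : ℚ) ^ r / (Nat.totient e : ℚ) ^ (k - 1) := by
    rw [Finset.mul_sum]
    rw [← Nat.sum_div_divisors n (fun d => (Nat.totient n : ℚ) ^ k *
      (((d : ℕ) : ℚ) ^ r / (Nat.totient (n / d) : ℚ) ^ (k - 1)))]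
    refine Finset.sum_congr rfl fun d hd => ?_
    rw [Nat.div_div_self (Nat.mem_divisors.mp hd).1 hn.ne']
    ring
  rw [rhs]
  refine Finset.sum_congr rfl fun e he => ?_
  obtain ⟨hen, _⟩ := Nat.mem_divisors.mp he
  have hepos : 0 < e := Nat.pos_of_dvd_of_pos hen hn
  have hφe : (0:ℚ) < (e.totient : ℚ) := by exact_mod_cast Nat.totient_pos.mpr hepos
  have hc : ∀ i : Fin k, (((Finset.Icc 1 n).filter
      (fun x => Nat.gcd x n = 1 ∧ (e : ℤ) ∣ ((x : ℤ) - a i))).card : ℚ)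
      = (n.totient : ℚ) / (e.totient : ℚ) := by
    intro i
    have := count_m n e hn hen (a i) (ha i)
    have h2 : (((Finset.Icc 1 n).filter
        (fun x => Nat.gcd x n = 1 ∧ (e : ℤ) ∣ ((x : ℤ) - a i))).card : ℚ) * (e.totient : ℚ)
        = (n.totient : ℚ) := by exact_mod_cast congrArg (Nat.cast : ℕ → ℚ) this
    field_simp at h2 ⊢
    linarith [h2]
  simp_rw [hc]
  rw [Finset.prod_const, Finset.card_univ, Fintype.card_fin]
  obtain ⟨k', rfl⟩ : ∃ k', k = k' + 1 := ⟨k - 1, (Nat.succ_pred_eq_of_pos hk).symm⟩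
  simp only [Nat.add_sub_cancel]
  rw [div_pow]
  field_simp
  ring
end

section
/- Let n, s be positive integers. Then Σ (m − 1, n^s)_s = Φ_s(n^s) · τ_s(n^s), where the sum is over all integers m with 1 ≤ m ≤ n^s and (m, n^s)_s = 1. -/
/-- `τ_s(n)`: the number of positive integers `l` with `l ^ s ∣ n`. -/
def tauS (s n : ℕ) : ℕ := ((Finset.Icc 1 n).filter (fun l => l ^ s ∣ n)).card

open Finset Nat ArithmeticFunction
open scoped ArithmeticFunction.Moebius ArithmeticFunction.zeta

private lemma pow_lcm_dvd {s a b k : ℕ} (hs : s ≠ 0) (hk : k ≠ 0)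
    (ha : a ^ s ∣ k) (hb : b ^ s ∣ k) : Nat.lcm a b ^ s ∣ k := by
  have ha0 : a ≠ 0 := by
    rintro rfl; exact hk (Nat.eq_zero_of_zero_dvd (by simpa [zero_pow hs] using ha))
  have hb0 : b ≠ 0 := by
    rintro rfl; exact hk (Nat.eq_zero_of_zero_dvd (by simpa [zero_pow hs] using hb))
  have h1 : Nat.lcm a b ^ s ∣ Nat.lcm (a ^ s) (b ^ s) := by
    rw [← Nat.factorization_le_iff_dvd (pow_ne_zero _ (Nat.lcm_ne_zero ha0 hb0))
      (Nat.lcm_ne_zero (pow_ne_zero _ ha0) (pow_ne_zero _ hb0)),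
      Nat.factorization_pow, Nat.factorization_lcm ha0 hb0,
      Nat.factorization_lcm (pow_ne_zero _ ha0) (pow_ne_zero _ hb0),
      Nat.factorization_pow, Nat.factorization_pow]
    intro p
    simp only [Finsupp.smul_apply, Finsupp.sup_apply, smul_eq_mul]
    rcases le_total (a.factorization p) (b.factorization p) with h | h
    · rw [sup_of_le_right h]; exact le_sup_of_le_right le_rfl
    · rw [sup_of_le_left h]; exact le_sup_of_le_left le_rfl
  exact h1.trans (Nat.lcm_dvd ha hb)

private lemma spow_spec (s : ℕ) (hs : 0 < s) (k : ℕ) (hk : k ≠ 0) :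
    ∃ G : ℕ, 0 < G ∧ sPowGcd s k = G ^ s ∧ (∀ l : ℕ, l ^ s ∣ k ↔ l ∣ G) := by
  set G := Nat.findGreatest (fun l => l ^ s ∣ k) k with hG
  have hk1 : 1 ≤ k := Nat.one_le_iff_ne_zero.2 hk
  have h1 : (1 : ℕ) ^ s ∣ k := by simp
  have hGpos : 0 < G := Nat.le_findGreatest hk1 h1
  have hGs : G ^ s ∣ k := Nat.findGreatest_spec (P := fun l => l ^ s ∣ k) (m := 1) hk1 h1
  refine ⟨G, hGpos, rfl, fun l => ⟨fun hl => ?_,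
    fun hl => dvd_trans (pow_dvd_pow_of_dvd hl s) hGs⟩⟩
  have hl0 : l ≠ 0 := by
    rintro rfl; exact hk (Nat.eq_zero_of_zero_dvd (by simpa [zero_pow hs.ne'] using hl))
  have hlcm : Nat.lcm l G ^ s ∣ k := pow_lcm_dvd hs.ne' hk hl hGs
  have hlcm0 : 0 < Nat.lcm l G := Nat.pos_of_ne_zero (Nat.lcm_ne_zero hl0 hGpos.ne')
  have hle : Nat.lcm l G ≤ k :=
    le_trans (Nat.le_self_pow hs.ne' _) (Nat.le_of_dvd (Nat.pos_of_ne_zero hk) hlcm)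
  have h2 : Nat.lcm l G ≤ G := Nat.le_findGreatest hle hlcm
  have h3 : G ≤ Nat.lcm l G := Nat.le_of_dvd hlcm0 (Nat.dvd_lcm_right _ _)
  have h4 : Nat.lcm l G = G := le_antisymm h2 h3
  exact h4 ▸ Nat.dvd_lcm_left l G

private lemma divisor_filter_eq (n s : ℕ) (hn : 0 < n) (hs : 0 < s) (m : ℕ) :
    ∃ G : ℕ, 0 < G ∧ G ∣ n ∧ sPowGcd s (Nat.gcd m (n ^ s)) = G ^ s ∧
      (n.divisors.filter (fun l => l ^ s ∣ m)) = G.divisors := by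
  have hN0 : n ^ s ≠ 0 := (pow_pos hn s).ne'
  have hk : Nat.gcd m (n ^ s) ≠ 0 := fun h => hN0 (Nat.eq_zero_of_gcd_eq_zero_right h)
  obtain ⟨G, hG0, hGe, hGiff⟩ := spow_spec s hs _ hk
  have haux : ∀ l : ℕ, l ^ s ∣ Nat.gcd m (n ^ s) ↔ (l ∣ n ∧ l ^ s ∣ m) := by
    intro l
    rw [Nat.dvd_gcd_iff, Nat.pow_dvd_pow_iff hs.ne', and_comm]
  have hGn : G ∣ n := ((haux G).1 ((hGiff G).2 dvd_rfl)).1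
  refine ⟨G, hG0, hGn, hGe, ?_⟩
  ext l
  simp only [Finset.mem_filter, Nat.mem_divisors]
  constructor
  · rintro ⟨⟨hln, -⟩, hlm⟩
    exact ⟨(hGiff l).1 ((haux l).2 ⟨hln, hlm⟩), hG0.ne'⟩
  · rintro ⟨hlG, -⟩
    obtain ⟨hln, hlm⟩ := (haux l).1 ((hGiff l).2 hlG)
    exact ⟨⟨hln, hn.ne'⟩, hlm⟩

private def Jf (s l : ℕ) : ℤ := ∑ d ∈ l.divisors, μ d * (((l / d) ^ s : ℕ) : ℤ)

private lemma Jf_eq (s : ℕ) (hs : s ≠ 0) (l : ℕ) :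
    ((μ : ArithmeticFunction ℤ)
      * ((ArithmeticFunction.pow s : ArithmeticFunction ℕ) : ArithmeticFunction ℤ)) l
      = Jf s l := by
  rw [ArithmeticFunction.mul_apply,
    Nat.sum_divisorsAntidiagonal
      (fun d e => (μ d : ℤ) * (((ArithmeticFunction.pow s : ArithmeticFunction ℕ) :
        ArithmeticFunction ℤ) e))]
  refine Finset.sum_congr rfl fun d hd => ?_
  simp [Jf, ArithmeticFunction.natCoe_apply, ArithmeticFunction.pow_apply, hs]

private lemma sum_Jf (s : ℕ) (hs : s ≠ 0) (G : ℕ) :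
    ∑ l ∈ G.divisors, Jf s l = ((G : ℤ)) ^ s := by
  calc ∑ l ∈ G.divisors, Jf s l
      = ∑ l ∈ G.divisors, ((μ : ArithmeticFunction ℤ)
          * ((ArithmeticFunction.pow s : ArithmeticFunction ℕ) : ArithmeticFunction ℤ)) l :=
        Finset.sum_congr rfl fun l _ => (Jf_eq s hs l).symm
    _ = (((μ : ArithmeticFunction ℤ)
          * ((ArithmeticFunction.pow s : ArithmeticFunction ℕ) : ArithmeticFunction ℤ)) * ζ) G :=
        coe_mul_zeta_apply.symm
    _ = (((μ * ζ : ArithmeticFunction ℤ))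
          * ((ArithmeticFunction.pow s : ArithmeticFunction ℕ) : ArithmeticFunction ℤ)) G := by
        rw [mul_right_comm]
    _ = (((ArithmeticFunction.pow s : ArithmeticFunction ℕ) : ArithmeticFunction ℤ)) G := by
        rw [moebius_mul_coe_zeta, one_mul]
    _ = (G : ℤ) ^ s := by
        simp [ArithmeticFunction.natCoe_apply, ArithmeticFunction.pow_apply, hs]

private lemma sum_moebius_ind (G : ℕ) :
    ∑ d ∈ G.divisors, (μ d : ℤ) = if G = 1 then 1 else 0 := by
  have h := (coe_mul_zeta_apply (f := (μ : ArithmeticFunction ℤ)) (x := G)).symm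
  rw [h, moebius_mul_coe_zeta, ArithmeticFunction.one_apply]

private lemma swap_sum (s t : Finset ℕ) (p : ℕ → ℕ → Prop) [∀ l m, Decidable (p l m)]
    (f : ℕ → ℤ) :
    ∑ m ∈ s, ∑ l ∈ t.filter (fun l => p l m), f l
      = ∑ l ∈ t, f l * ((s.filter (fun m => p l m)).card : ℤ) := by
  simp_rw [Finset.sum_filter]
  rw [Finset.sum_comm]
  refine Finset.sum_congr rfl fun l _ => ?_
  rw [← Finset.sum_filter, Finset.sum_const, nsmul_eq_mul, mul_comm]

private lemma count_cong (n s k l : ℕ) (hs : 0 < s) (hn : 0 < n)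
    (hkl : k * l ∣ n) (hk : 0 < k) (hl : 0 < l) (hco : Nat.Coprime k l) :
    (((Finset.Icc 1 (n ^ s)).filter (fun m => l ^ s ∣ m - 1 ∧ k ^ s ∣ m)).card)
      = (n / (k * l)) ^ s := by
  set M := (k * l) ^ s with hM
  set T := (n / (k * l)) ^ s with hT
  have hM0 : 0 < M := pow_pos (Nat.mul_pos hk hl) s
  have hNTM : n ^ s = T * M := by
    rw [hT, hM, ← mul_pow, Nat.div_mul_cancel hkl]
  have hcop : Nat.Coprime (l ^ s) (k ^ s) := Nat.Coprime.pow s s hco.symm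
  have hkMpos : 0 < k ^ s := pow_pos hk s
  have hlsM : l ^ s ∣ M := pow_dvd_pow_of_dvd (dvd_mul_left l k) s
  have hksM : k ^ s ∣ M := pow_dvd_pow_of_dvd (dvd_mul_right k l) s
  obtain ⟨x, hx1, hx2⟩ := Nat.chineseRemainder hcop 0 (k ^ s - 1)
  set c := x % M with hc
  have hcM : c < M := Nat.mod_lt _ hM0
  have hcl : l ^ s ∣ c := by
    have : c % l ^ s = x % l ^ s := Nat.mod_mod_of_dvd x hlsM
    rw [hx1] at this
    exact Nat.dvd_of_mod_eq_zero (by simpa using this)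
  have hck : c ≡ k ^ s - 1 [MOD k ^ s] := by
    have : c % k ^ s = x % k ^ s := Nat.mod_mod_of_dvd x hksM
    exact Nat.ModEq.trans this hx2
  have hck1 : k ^ s ∣ c + 1 := by
    have h2 : c + 1 ≡ (k ^ s - 1) + 1 [MOD k ^ s] := Nat.ModEq.add_right 1 hck
    have hkk : k ^ s - 1 + 1 = k ^ s := by omega
    rw [hkk] at h2
    have h3 : c + 1 ≡ 0 [MOD k ^ s] := h2.trans (Nat.modEq_zero_iff_dvd.2 dvd_rfl)
    exact (Nat.modEq_zero_iff_dvd).1 h3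
  have key : ∀ m, 1 ≤ m → l ^ s ∣ m - 1 → k ^ s ∣ m → (m - 1) % M = c := by
    intro m hm1 hml hmk
    have e1 : m - 1 ≡ c [MOD l ^ s] :=
      (Nat.modEq_zero_iff_dvd.2 hml).trans (Nat.modEq_zero_iff_dvd.2 hcl).symm
    have e2 : m - 1 ≡ c [MOD k ^ s] := by
      have h4 : m ≡ c + 1 [MOD k ^ s] :=
        (Nat.modEq_zero_iff_dvd.2 hmk).trans (Nat.modEq_zero_iff_dvd.2 hck1).symm
      have h5 : (m - 1) + 1 ≡ c + 1 [MOD k ^ s] := by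
        rwa [Nat.sub_add_cancel hm1]
      exact Nat.ModEq.add_right_cancel' 1 h5
    have e3 : m - 1 ≡ c [MOD l ^ s * k ^ s] :=
      (Nat.modEq_and_modEq_iff_modEq_mul hcop).1 ⟨e1, e2⟩
    have hMe : l ^ s * k ^ s = M := by rw [hM, mul_pow, mul_comm]
    rw [hMe] at e3
    calc (m - 1) % M = c % M := e3
      _ = c := Nat.mod_eq_of_lt hcM
  rw [← Finset.card_range T]
  refine Finset.card_bij' (fun m _ => (m - 1) / M) (fun t _ => t * M + c + 1) ?_ ?_ ?_ ?_
  · intro m hm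
    simp only [Finset.mem_filter, Finset.mem_Icc] at hm
    obtain ⟨⟨hm1, hm2⟩, -, -⟩ := hm
    rw [Finset.mem_range]
    rw [Nat.div_lt_iff_lt_mul hM0]
    calc m - 1 < n ^ s := by omega
      _ = T * M := hNTM
  · intro t ht
    rw [Finset.mem_range] at ht
    simp only [Finset.mem_filter, Finset.mem_Icc]
    have hb : (t + 1) * M ≤ T * M := Nat.mul_le_mul_right M (by omega)
    have hb2 : (t + 1) * M = t * M + M := by ring
    refine ⟨⟨by omega, by omega⟩, ?_, ?_⟩
    · have : t * M + c + 1 - 1 = t * M + c := by omega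
      rw [this]
      exact dvd_add (Dvd.dvd.mul_left hlsM t) hcl
    · have : t * M + c + 1 = t * M + (c + 1) := by omega
      rw [this]
      exact dvd_add (Dvd.dvd.mul_left hksM t) hck1
  · intro m hm
    simp only [Finset.mem_filter, Finset.mem_Icc] at hm
    obtain ⟨⟨hm1, -⟩, hml, hmk⟩ := hm
    have h6 := key m hm1 hml hmk
    have h7 := Nat.div_add_mod (m - 1) M
    show (m - 1) / M * M + c + 1 = m
    have h9 : (m - 1) / M * M = M * ((m - 1) / M) := Nat.mul_comm _ _
    omega
  · intro t ht
    show (t * M + c + 1 - 1) / M = t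
    have h8 : t * M + c + 1 - 1 = c + t * M := by omega
    rw [h8, Nat.add_mul_div_right c t hM0, Nat.div_eq_of_lt hcM, zero_add]

private lemma keyA (n s : ℕ) (hn : 0 < n) (hs : 0 < s) (l : ℕ) (hl : l ∈ n.divisors) :
    ((((Finset.Icc 1 (n ^ s)).filter (fun m => sPowGcd s (Nat.gcd m (n ^ s)) = 1)).filter
        (fun m => l ^ s ∣ m - 1)).card : ℤ)
      = ∑ k ∈ n.divisors, (μ k : ℤ) *
          (if Nat.gcd k l = 1 then (((n / (k * l)) ^ s : ℕ) : ℤ) else 0) := by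
  obtain ⟨hldvd, -⟩ := Nat.mem_divisors.1 hl
  have hl0 : 0 < l := Nat.pos_of_dvd_of_pos hldvd hn
  set T := (Finset.Icc 1 (n ^ s)).filter (fun m => l ^ s ∣ m - 1) with hT
  have h1 : (((Finset.Icc 1 (n ^ s)).filter (fun m => sPowGcd s (Nat.gcd m (n ^ s)) = 1)).filter
        (fun m => l ^ s ∣ m - 1))
      = T.filter (fun m => sPowGcd s (Nat.gcd m (n ^ s)) = 1) := by
    rw [hT, Finset.filter_filter, Finset.filter_filter]
    exact Finset.filter_congr fun m _ => by tauto
  rw [h1, ← Finset.sum_boole]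
  have h2 : ∀ m ∈ T, (if sPowGcd s (Nat.gcd m (n ^ s)) = 1 then (1:ℤ) else 0)
      = ∑ k ∈ n.divisors.filter (fun k => k ^ s ∣ m), (μ k : ℤ) := by
    intro m _
    obtain ⟨G, hG0, hGn, hGe, hGf⟩ := divisor_filter_eq n s hn hs m
    have hcond : (sPowGcd s (Nat.gcd m (n ^ s)) = 1) ↔ (G = 1) := by
      rw [hGe, pow_eq_one_iff_left hs.ne']
    rw [hGf, sum_moebius_ind, if_congr hcond rfl rfl]
  rw [Finset.sum_congr rfl h2, swap_sum T n.divisors (fun k m => k ^ s ∣ m) (fun k => (μ k : ℤ))]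
  refine Finset.sum_congr rfl fun k hk => ?_
  congr 1
  obtain ⟨hkdvd, -⟩ := Nat.mem_divisors.1 hk
  have hk0 : 0 < k := Nat.pos_of_dvd_of_pos hkdvd hn
  rw [hT, Finset.filter_filter]
  by_cases hco : Nat.gcd k l = 1
  · rw [if_pos hco]
    have hkl : k * l ∣ n := Nat.Coprime.mul_dvd_of_dvd_of_dvd hco hkdvd hldvd
    exact_mod_cast count_cong n s k l hs hn hkl hk0 hl0 hco
  · rw [if_neg hco]
    norm_cast
    rw [Finset.card_eq_zero, Finset.filter_eq_empty_iff]
    intro m hm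
    rw [Finset.mem_Icc] at hm
    rintro ⟨hml, hmk⟩
    have htl : Nat.gcd k l ^ s ∣ m - 1 :=
      dvd_trans (pow_dvd_pow_of_dvd (Nat.gcd_dvd_right k l) s) hml
    have htk : Nat.gcd k l ^ s ∣ m :=
      dvd_trans (pow_dvd_pow_of_dvd (Nat.gcd_dvd_left k l) s) hmk
    have hd1 : Nat.gcd k l ^ s ∣ m - (m - 1) := Nat.dvd_sub htk htl
    have hd2 : m - (m - 1) = 1 := by omega
    rw [hd2, Nat.dvd_one, pow_eq_one_iff_left hs.ne'] at hd1
    exact hco hd1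

private lemma keyJ (n s : ℕ) (hn : 0 < n) (hs : 0 < s) (l : ℕ) (hl : l ∈ n.divisors) :
    Jf s l * (∑ k ∈ n.divisors, (μ k : ℤ) *
        (if Nat.gcd k l = 1 then (((n / (k * l)) ^ s : ℕ) : ℤ) else 0))
      = ∑ c ∈ n.divisors, (μ c : ℤ) * (((n / c) ^ s : ℕ) : ℤ) := by
  obtain ⟨hldvd, hn0⟩ := Nat.mem_divisors.1 hl
  have hl0 : 0 < l := Nat.pos_of_dvd_of_pos hldvd hn
  have hA : ∑ k ∈ n.divisors, (μ k : ℤ) *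
        (if Nat.gcd k l = 1 then (((n / (k * l)) ^ s : ℕ) : ℤ) else 0)
      = ∑ k ∈ n.divisors.filter (fun k => Nat.gcd k l = 1),
          (μ k : ℤ) * (((n / (k * l)) ^ s : ℕ) : ℤ) := by
    rw [Finset.sum_filter]
    exact Finset.sum_congr rfl fun k _ => by by_cases h : Nat.gcd k l = 1 <;> simp [h]
  rw [hA, Jf, Finset.sum_mul_sum]
  have hterm : ∀ d ∈ l.divisors, ∀ k ∈ n.divisors.filter (fun k => Nat.gcd k l = 1),
      ((μ d : ℤ) * (((l / d) ^ s : ℕ) : ℤ)) * ((μ k : ℤ) * (((n / (k * l)) ^ s : ℕ) : ℤ))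
        = (μ (d * k) : ℤ) * (((n / (d * k)) ^ s : ℕ) : ℤ) := by
    intro d hd k hk
    obtain ⟨hddvd, -⟩ := Nat.mem_divisors.1 hd
    obtain ⟨hkmem, hkco⟩ := Finset.mem_filter.1 hk
    obtain ⟨hkdvd, -⟩ := Nat.mem_divisors.1 hkmem
    have hkl : k * l ∣ n := Nat.Coprime.mul_dvd_of_dvd_of_dvd hkco hkdvd hldvd
    have hco2 : Nat.Coprime d k := ((Nat.Coprime.coprime_dvd_right hddvd hkco)).symm
    have hmu : (μ (d * k) : ℤ) = μ d * μ k := isMultiplicative_moebius.map_mul_of_coprime hco2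
    have hpow : (l / d) * (n / (k * l)) = n / (d * k) := by
      rw [Nat.div_mul_div_comm hddvd hkl]
      have he : d * (k * l) = l * (d * k) := by ring
      rw [he, Nat.mul_div_mul_left _ _ hl0]
    have hpow2 : ((l / d) ^ s) * ((n / (k * l)) ^ s) = (n / (d * k)) ^ s := by
      rw [← mul_pow, hpow]
    rw [hmu, ← hpow2]
    push_cast
    ring
  rw [Finset.sum_congr rfl fun d hd => Finset.sum_congr rfl fun k hk => hterm d hd k hk]
  rw [← Finset.sum_product']
  have hzero : ∀ p ∈ l.divisors ×ˢ (n.divisors.filter (fun k => Nat.gcd k l = 1)),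
      (μ (p.1 * p.2) : ℤ) * (((n / (p.1 * p.2)) ^ s : ℕ) : ℤ) ≠ 0 → Squarefree (p.1 * p.2) := by
    intro p _ hne
    by_contra hsq
    exact hne (by rw [moebius_eq_zero_of_not_squarefree hsq, zero_mul])
  have hzero2 : ∀ c ∈ n.divisors,
      (μ c : ℤ) * (((n / c) ^ s : ℕ) : ℤ) ≠ 0 → Squarefree c := by
    intro c _ hne
    by_contra hsq
    exact hne (by rw [moebius_eq_zero_of_not_squarefree hsq, zero_mul])
  rw [← Finset.sum_filter_of_ne hzero, ← Finset.sum_filter_of_ne hzero2]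
  refine Finset.sum_nbij' (fun p => p.1 * p.2) (fun c => (Nat.gcd c l, c / Nat.gcd c l))
    ?_ ?_ ?_ ?_ ?_
  · rintro ⟨d, k⟩ hp
    rw [Finset.mem_filter, Finset.mem_product, Finset.mem_filter] at hp
    obtain ⟨⟨hd, hkmem, hkco⟩, hsq⟩ := hp
    obtain ⟨hddvd, -⟩ := Nat.mem_divisors.1 hd
    obtain ⟨hkdvd, -⟩ := Nat.mem_divisors.1 hkmem
    have hkl : k * l ∣ n := Nat.Coprime.mul_dvd_of_dvd_of_dvd hkco hkdvd hldvd
    have hdkn : d * k ∣ n := dvd_trans (by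
      calc d * k ∣ l * k := mul_dvd_mul_right hddvd k
        _ = k * l := mul_comm l k) hkl
    rw [Finset.mem_filter, Nat.mem_divisors]
    exact ⟨⟨hdkn, hn.ne'⟩, hsq⟩
  · intro c hc
    rw [Finset.mem_filter, Nat.mem_divisors] at hc
    obtain ⟨⟨hcdvd, -⟩, hsq⟩ := hc
    have hgl : Nat.gcd c l ∣ l := Nat.gcd_dvd_right c l
    have hgc : Nat.gcd c l ∣ c := Nat.gcd_dvd_left c l
    have hg0 : 0 < Nat.gcd c l := Nat.gcd_pos_of_pos_right c hl0
    have hkc : c / Nat.gcd c l ∣ c := Nat.div_dvd_of_dvd hgc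
    have hco : Nat.Coprime (c / Nat.gcd c l) l := by
      by_contra hnc
      obtain ⟨p, hp, hp1, hp2⟩ := Nat.Prime.not_coprime_iff_dvd.mp hnc
      have hpc : p ∣ c := dvd_trans hp1 hkc
      have hpg : p ∣ Nat.gcd c l := Nat.dvd_gcd hpc hp2
      have hpp : p * p ∣ c := by
        have h9 : p * p ∣ (c / Nat.gcd c l) * Nat.gcd c l := mul_dvd_mul hp1 hpg
        rwa [Nat.div_mul_cancel hgc] at h9
      exact hp.not_isUnit (hsq p hpp)
    simp only [Finset.mem_filter, Finset.mem_product, Nat.mem_divisors]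
    refine ⟨⟨⟨hgl, hl0.ne'⟩, ⟨dvd_trans hkc hcdvd, hn.ne'⟩, hco⟩, ?_⟩
    rwa [Nat.mul_div_cancel' hgc]
  · rintro ⟨d, k⟩ hp
    rw [Finset.mem_filter, Finset.mem_product, Finset.mem_filter] at hp
    obtain ⟨⟨hd, hkmem, hkco⟩, -⟩ := hp
    obtain ⟨hddvd, hl0'⟩ := Nat.mem_divisors.1 hd
    have hd0 : 0 < d := Nat.pos_of_dvd_of_pos hddvd (Nat.pos_of_ne_zero hl0')
    have hg : Nat.gcd (d * k) l = d := by
      rw [Nat.Coprime.gcd_mul_right_cancel d hkco, Nat.gcd_eq_left hddvd]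
    simp only [hg]
    rw [Nat.mul_div_cancel_left k hd0]
  · intro c hc
    rw [Finset.mem_filter, Nat.mem_divisors] at hc
    exact Nat.mul_div_cancel' (Nat.gcd_dvd_left c l)
  · rintro ⟨d, k⟩ _
    rfl

theorem stmt_6 (n s : ℕ) (hn : 0 < n) (hs : 0 < s) :
    ∑ m ∈ (Finset.Icc 1 (n ^ s)).filter (fun m => sPowGcd s (Nat.gcd m (n ^ s)) = 1),
      sPowGcd s (Nat.gcd (m - 1) (n ^ s))
    = klee s (n ^ s) * tauS s (n ^ s) := by
  classical
  set S := (Finset.Icc 1 (n ^ s)).filter (fun m => sPowGcd s (Nat.gcd m (n ^ s)) = 1) with hS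
  set Φ : ℤ := ∑ c ∈ n.divisors, (μ c : ℤ) * (((n / c) ^ s : ℕ) : ℤ) with hΦ
  have hterm : ∀ m : ℕ, ((sPowGcd s (Nat.gcd (m - 1) (n ^ s)) : ℕ) : ℤ)
      = ∑ l ∈ n.divisors.filter (fun l => l ^ s ∣ m - 1), Jf s l := by
    intro m
    obtain ⟨G, hG0, hGn, hGe, hGf⟩ := divisor_filter_eq n s hn hs (m - 1)
    rw [hGe, hGf, sum_Jf s hs.ne' G]
    push_cast
    rfl
  have step1 : ((∑ m ∈ S, sPowGcd s (Nat.gcd (m - 1) (n ^ s)) : ℕ) : ℤ)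
      = ∑ l ∈ n.divisors, Jf s l * ((S.filter (fun m => l ^ s ∣ m - 1)).card : ℤ) := by
    push_cast
    rw [Finset.sum_congr rfl fun m _ => hterm m]
    exact swap_sum S n.divisors (fun l m => l ^ s ∣ m - 1) (Jf s)
  have hkey : ∀ l ∈ n.divisors,
      Jf s l * ((S.filter (fun m => l ^ s ∣ m - 1)).card : ℤ) = Φ := by
    intro l hl
    rw [hS, keyA n s hn hs l hl]
    exact keyJ n s hn hs l hl
  have hklee : klee s (n ^ s) = S.card := by rw [hS]; rfl
  have hkleeZ : (S.card : ℤ) = Φ := by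
    have h1 := hkey 1 (Nat.one_mem_divisors.2 hn.ne')
    have hJ1 : Jf s 1 = 1 := by simp [Jf]
    have hfil : S.filter (fun m => 1 ^ s ∣ m - 1) = S :=
      Finset.filter_true_of_mem (fun m _ => by simp)
    rw [hJ1, hfil, one_mul] at h1
    exact h1
  have htau : tauS s (n ^ s) = n.divisors.card := by
    unfold tauS
    congr 1
    ext l
    simp only [Finset.mem_filter, Finset.mem_Icc, Nat.mem_divisors]
    constructor
    · rintro ⟨⟨h1, h2⟩, h3⟩
      exact ⟨(Nat.pow_dvd_pow_iff hs.ne').1 h3, hn.ne'⟩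
    · rintro ⟨h1, -⟩
      have hl0 : 0 < l := Nat.pos_of_dvd_of_pos h1 hn
      exact ⟨⟨hl0, le_trans (Nat.le_of_dvd hn h1) (Nat.le_self_pow hs.ne' n)⟩,
        pow_dvd_pow_of_dvd h1 s⟩
  have main : ((∑ m ∈ S, sPowGcd s (Nat.gcd (m - 1) (n ^ s)) : ℕ) : ℤ)
      = ((klee s (n ^ s) * tauS s (n ^ s) : ℕ) : ℤ) := by
    rw [step1, Finset.sum_congr rfl hkey, Finset.sum_const, nsmul_eq_mul]
    push_cast
    rw [hklee, htau, hkleeZ]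
    push_cast
    ring
  exact_mod_cast main
end

section
/- For all positive integers n and s, Φ_s(n) = Σ_{d : d^s | n} μ(d) · n/d^s, where the sum is over all positive integers d with d^s dividing n and μ is the Möbius function. -/
open Finset ArithmeticFunction ArithmeticFunction.Moebius

lemma squarefree_prod_primes {t : Finset ℕ} (ht : ∀ p ∈ t, p.Prime) :
    Squarefree (∏ p ∈ t, p) := by
  classical
  induction t using Finset.induction_on with
| empty => simpa using squarefree_one
    | @insert a u ha ih =>
    rw [Finset.prod_insert ha]
    have hap := ht a (Finset.mem_insert_self a u)
    have hcop : Nat.Coprime a (∏ p ∈ u, p) :=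
      Nat.Coprime.prod_right fun q hq =>
        (Nat.coprime_primes hap (ht q (Finset.mem_insert_of_mem hq))).2
          (fun h => ha (h ▸ hq))
    exact (Nat.squarefree_mul hcop).mpr
      ⟨hap.prime.irreducible.squarefree, ih fun p hp => ht p (Finset.mem_insert_of_mem hp)⟩

lemma indicator_eq_sum (s k : ℕ) (hs : 0 < s) (hk : 0 < k) :
    (if sPowGcd s k = 1 then (1 : ℤ) else 0) =
      ∑ d ∈ (Finset.Icc 1 k).filter (fun d => d ^ s ∣ k), μ d := by
  classical
  set t := k.primeFactors.filter (fun p => p ^ s ∣ k) with ht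
  have htp : ∀ p ∈ t, p.Prime := fun p hp =>
    Nat.prime_of_mem_primeFactors (Finset.mem_filter.mp hp).1
  have htdvd : ∀ p ∈ t, p ^ s ∣ k := fun p hp => (Finset.mem_filter.mp hp).2
  set r := ∏ p ∈ t, p with hrdef
  have hrsf : Squarefree r := squarefree_prod_primes htp
  have hr0 : r ≠ 0 := hrsf.ne_zero
  have hpf : r.primeFactors = t := Nat.primeFactors_prod htp
  -- forward: divisors of r have s-th power dividing k
  have h1 : ∀ d : ℕ, d ∣ r → d ^ s ∣ k := by
    intro d hd
    have hd0 : d ≠ 0 := fun h => hr0 (Nat.eq_zero_of_zero_dvd (h ▸ hd))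
    have hdsf : Squarefree d := hrsf.squarefree_of_dvd hd
    rw [← Nat.factorization_le_iff_dvd (pow_ne_zero _ hd0) hk.ne']
    intro p
    rw [Nat.factorization_pow]
    simp only [Finsupp.smul_apply, smul_eq_mul]
    by_cases hp : d.factorization p = 0
    · simp [hp]
    · have hpd : p ∈ d.primeFactors := by
        rw [← Nat.support_factorization]; exact Finsupp.mem_support_iff.mpr hp
      have hpt : p ∈ t := by
        rw [← hpf]
        exact Nat.primeFactors_mono hd hr0 hpd
      have hple : d.factorization p ≤ 1 := hdsf.natFactorization_le_one p
      calc s * d.factorization p ≤ s * 1 := Nat.mul_le_mul_left s hple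
        _ = s := Nat.mul_one s
        _ ≤ k.factorization p :=
          ((htp p hpt).pow_dvd_iff_le_factorization hk.ne').mp (htdvd p hpt)
  -- backward: squarefree d with d^s ∣ k divides r
  have h2 : ∀ d : ℕ, Squarefree d → d ^ s ∣ k → d ∣ r := by
    intro d hdsf hdk
    have hsub : d.primeFactors ⊆ t := by
      intro p hp
      have hpp := Nat.prime_of_mem_primeFactors hp
      have hpd : p ∣ d := Nat.dvd_of_mem_primeFactors hp
      have hpsk : p ^ s ∣ k := (pow_dvd_pow_of_dvd hpd s).trans hdk
      have hpk : p ∣ k := (dvd_pow_self p hs.ne').trans hpsk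
      exact Finset.mem_filter.mpr ⟨Nat.mem_primeFactors.mpr ⟨hpp, hpk, hk.ne'⟩, hpsk⟩
    calc d = ∏ p ∈ d.primeFactors, p := (Nat.prod_primeFactors_of_squarefree hdsf).symm
      _ ∣ r := Finset.prod_dvd_prod_of_subset _ _ _ hsub
  -- the two sums agree
  have hsum : ∑ d ∈ (Finset.Icc 1 k).filter (fun d => d ^ s ∣ k), (μ d : ℤ)
      = ∑ d ∈ r.divisors, (μ d : ℤ) := by
    have hL := Finset.sum_filter_of_ne
      (s := (Finset.Icc 1 k).filter (fun d => d ^ s ∣ k)) (p := fun d => Squarefree d)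
      (f := fun d => (μ d : ℤ)) (fun d _ h => moebius_ne_zero_iff_squarefree.mp h)
    have hR := Finset.sum_filter_of_ne (s := r.divisors) (p := fun d => Squarefree d)
      (f := fun d => (μ d : ℤ)) (fun d _ h => moebius_ne_zero_iff_squarefree.mp h)
    rw [← hL, ← hR]
    apply Finset.sum_congr _ (fun _ _ => rfl)
    ext d
    simp only [Finset.mem_filter, Finset.mem_Icc, Nat.mem_divisors]
    constructor
    · rintro ⟨⟨⟨h1d, h2d⟩, h3d⟩, hsf⟩
      exact ⟨⟨h2 d hsf h3d, hr0⟩, hsf⟩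
    · rintro ⟨⟨hdr, _⟩, hsf⟩
      have hd0 : d ≠ 0 := fun h => hr0 (Nat.eq_zero_of_zero_dvd (h ▸ hdr))
      have hdk : d ^ s ∣ k := h1 d hdr
      have hdd : d ∣ k := (dvd_pow_self d hs.ne').trans hdk
      exact ⟨⟨⟨Nat.one_le_iff_ne_zero.mpr hd0, Nat.le_of_dvd hk hdd⟩, hdk⟩, hsf⟩
  have hmoeb : ∑ d ∈ r.divisors, (μ d : ℤ) = if r = 1 then 1 else 0 := by
    have h := coe_mul_zeta_apply (f := (μ : ArithmeticFunction ℤ)) (x := r)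
    rw [moebius_mul_coe_zeta] at h
    rw [← h, one_apply]
  -- the conditions agree
  have hcond : sPowGcd s k = 1 ↔ r = 1 := by
    unfold sPowGcd
    rw [pow_eq_one_iff, or_iff_left hs.ne']
    constructor
    · intro hg
      have hte : t = ∅ := by
        rw [Finset.eq_empty_iff_forall_notMem]
        intro p hp
        have hpp := htp p hp
        have hpk : p ∣ k := (dvd_pow_self p hs.ne').trans (htdvd p hp)
        have hple : p ≤ k := Nat.le_of_dvd hk hpk
        have h2 := Nat.le_findGreatest (P := fun l => l ^ s ∣ k) hple (htdvd p hp)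
        rw [hg] at h2
        have := hpp.two_le
        omega
      rw [hrdef, hte, Finset.prod_empty]
    · intro hr1
      have hg1 : 1 ≤ Nat.findGreatest (fun l => l ^ s ∣ k) k :=
        Nat.le_findGreatest (P := fun l => l ^ s ∣ k) hk (by simp)
      by_contra hne
      have hg2 : 2 ≤ Nat.findGreatest (fun l => l ^ s ∣ k) k := by omega
      have hgs : (Nat.findGreatest (fun l => l ^ s ∣ k) k) ^ s ∣ k :=
        Nat.findGreatest_spec (P := fun l => l ^ s ∣ k) (m := 1) hk (by simp)
      obtain ⟨p, hpp, hpd⟩ := Nat.exists_prime_and_dvd (by omega :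
        Nat.findGreatest (fun l => l ^ s ∣ k) k ≠ 1)
      have hpsk : p ^ s ∣ k := (pow_dvd_pow_of_dvd hpd s).trans hgs
      have hpk : p ∣ k := (dvd_pow_self p hs.ne').trans hpsk
      have hpt : p ∈ t := Finset.mem_filter.mpr
        ⟨Nat.mem_primeFactors.mpr ⟨hpp, hpk, hk.ne'⟩, hpsk⟩
      have : p ∣ r := Finset.dvd_prod_of_mem _ hpt
      rw [hr1] at this
      exact hpp.one_lt.ne' (Nat.eq_one_of_dvd_one this)
  rw [hsum, hmoeb]
  simp [hcond]

open ArithmeticFunction ArithmeticFunction.Moebius in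
theorem stmt_7 (n s : ℕ) (hn : 0 < n) (hs : 0 < s) :
    (klee s n : ℤ) =
      ∑ d ∈ (Finset.Icc 1 n).filter (fun d => d ^ s ∣ n), μ d * ((n / d ^ s : ℕ) : ℤ) := by
  classical
  have hsets : ∀ m, (Finset.Icc 1 (Nat.gcd m n)).filter (fun d => d ^ s ∣ Nat.gcd m n)
      = (Finset.Icc 1 n).filter (fun d => d ^ s ∣ m ∧ d ^ s ∣ n) := by
    intro m
    have hg : 0 < Nat.gcd m n := Nat.gcd_pos_of_pos_right m hn
    ext d
    simp only [Finset.mem_filter, Finset.mem_Icc, Nat.dvd_gcd_iff]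
    constructor
    · rintro ⟨⟨h1, h2⟩, h3, h4⟩
      refine ⟨⟨h1, Nat.le_of_dvd hn ((dvd_pow_self d hs.ne').trans h4)⟩, h3, h4⟩
    · rintro ⟨⟨h1, h2⟩, h3, h4⟩
      refine ⟨⟨h1, Nat.le_of_dvd hg ((dvd_pow_self d hs.ne').trans (Nat.dvd_gcd h3 h4))⟩, h3, h4⟩
  have step1 : (klee s n : ℤ)
      = ∑ m ∈ Finset.Icc 1 n, (if sPowGcd s (Nat.gcd m n) = 1 then (1 : ℤ) else 0) := by
    rw [klee, Finset.card_filter]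
    push_cast
    rfl
  rw [step1]
  rw [Finset.sum_congr rfl (fun m _ => indicator_eq_sum s (Nat.gcd m n) hs
    (Nat.gcd_pos_of_pos_right m hn))]
  rw [Finset.sum_congr rfl (fun m _ => by rw [hsets m])]
  rw [Finset.sum_congr rfl (fun m _ => Finset.sum_filter
    (fun d => d ^ s ∣ m ∧ d ^ s ∣ n) (fun d => (μ d : ℤ)))]
  rw [Finset.sum_comm]
  rw [Finset.sum_filter]
  refine Finset.sum_congr rfl fun d _ => ?_
  by_cases hdn : d ^ s ∣ n
  · simp only [hdn, and_true, if_true]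
    rw [← Finset.sum_filter, Finset.sum_const, nsmul_eq_mul, mul_comm]
    congr 1
    have : Finset.Icc 1 n = Finset.Ioc 0 n := Finset.Icc_add_one_left_eq_Ioc 0 n
    rw [this, Nat.Ioc_filter_dvd_card_eq_div n (d ^ s)]
  · simp [hdn]
end

section
/- For all positive integers n and s, Φ_s(n) = n · Π_{p prime, p^s | n} (1 − 1/p^s), where the product is over all primes p such that p^s divides n and the empty product is 1. -/
/-- Key counting lemma: the number of `1 ≤ m ≤ N` avoiding `p ^ s` for all `p` in a
finite set of primes `T`, provided `∏ p ∈ T, p ^ s` divides `N`. -/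
lemma count_avoid (s : ℕ) (hs : 0 < s) (T : Finset ℕ) (hT : ∀ p ∈ T, p.Prime) :
    ∀ N : ℕ, (∏ p ∈ T, p ^ s) ∣ N →
    (((Finset.Icc 1 N).filter (fun m => ∀ p ∈ T, ¬ p ^ s ∣ m)).card : ℚ)
      = N * ∏ p ∈ T, (1 - 1 / (p : ℚ) ^ s) := by
  classical
  induction T using Finset.induction_on with
  | empty => intro N _; simp [Nat.card_Icc]
  | @insert q T hq ih =>
    intro N hdvd
    have hqp : q.Prime := hT q (Finset.mem_insert_self q T)
    have hT' : ∀ p ∈ T, p.Prime := fun p hp => hT p (Finset.mem_insert_of_mem hp)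
    set Q := q ^ s with hQdef
    have hQpos : 0 < Q := pow_pos hqp.pos s
    have hprod : ∏ p ∈ insert q T, p ^ s = Q * ∏ p ∈ T, p ^ s := by
      rw [Finset.prod_insert hq]
    have hQdvdN : Q ∣ N := by
      refine dvd_trans ?_ hdvd
      rw [hprod]; exact Dvd.intro _ rfl
    have hTdvd : (∏ p ∈ T, p ^ s) ∣ N / Q := by
      rw [Nat.dvd_div_iff_mul_dvd hQdvdN, ← hprod]; exact hdvd
    -- coprimality of Q with each p^s for p ∈ T
    have hcop : ∀ p ∈ T, Nat.Coprime (p ^ s) Q := by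
      intro p hp
      have hpp := hT' p hp
      have hne : p ≠ q := by rintro rfl; exact hq hp
      exact Nat.Coprime.pow s s ((Nat.coprime_primes hpp hqp).mpr hne)
    set F := (Finset.Icc 1 N).filter (fun m => ∀ p ∈ T, ¬ p ^ s ∣ m) with hF
    -- split F by divisibility by Q
    have hsplit : (F.filter (fun m => ¬ Q ∣ m)).card + (F.filter (fun m => Q ∣ m)).card
        = F.card := by
      rw [add_comm]
      exact Finset.card_filter_add_card_filter_not (fun m => Q ∣ m)
    -- the avoiding set for `insert q T` is the first piece
    have hset : (Finset.Icc 1 N).filter (fun m => ∀ p ∈ insert q T, ¬ p ^ s ∣ m)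
        = F.filter (fun m => ¬ Q ∣ m) := by
      rw [hF, Finset.filter_filter]
      apply Finset.filter_congr
      intro m _
      simp only [Finset.mem_insert, hQdef]
      constructor
      · intro h; exact ⟨fun p hp => h p (Or.inr hp), h q (Or.inl rfl)⟩
      · rintro ⟨h1, h2⟩ p hp
        rcases hp with rfl | hp
        · exact h2
        · exact h1 p hp
    -- bijection between multiples of Q in F and the avoiding set for T up to N / Q
    have hbij : (F.filter (fun m => Q ∣ m)).card
        = ((Finset.Icc 1 (N / Q)).filter (fun m => ∀ p ∈ T, ¬ p ^ s ∣ m)).card := by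
      apply Finset.card_nbij' (fun m => m / Q) (fun m => Q * m)
      · intro m hm
        simp only [hF, Finset.mem_coe, Finset.mem_filter, Finset.mem_Icc] at hm ⊢
        obtain ⟨⟨⟨hm1, hmN⟩, havoid⟩, hQm⟩ := hm
        refine ⟨⟨?_, Nat.div_le_div_right hmN⟩, ?_⟩
        · exact Nat.one_le_div_iff hQpos |>.mpr (Nat.le_of_dvd (lt_of_lt_of_le one_pos hm1) hQm)
        · intro p hp hdvd'
          apply havoid p hp
          exact hdvd'.trans (Nat.div_dvd_of_dvd hQm)
      · intro m hm
        simp only [hF, Finset.mem_coe, Finset.mem_filter, Finset.mem_Icc] at hm ⊢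
        obtain ⟨⟨hm1, hmN⟩, havoid⟩ := hm
        refine ⟨⟨⟨Nat.one_le_iff_ne_zero.mpr (by positivity), ?_⟩, ?_⟩, Dvd.intro m rfl⟩
        · calc Q * m ≤ Q * (N / Q) := Nat.mul_le_mul_left Q hmN
            _ = N := Nat.mul_div_cancel' hQdvdN
        · intro p hp hdvd'
          exact havoid p hp ((Nat.Coprime.dvd_of_dvd_mul_left (hcop p hp) hdvd'))
      · intro m hm
        simp only [hF, Finset.mem_coe, Finset.mem_filter] at hm
        exact Nat.mul_div_cancel' hm.2
      · intro m _
        exact Nat.mul_div_cancel_left m hQpos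
    -- put it together in ℚ
    have hFcard : (F.card : ℚ) = N * ∏ p ∈ T, (1 - 1 / (p : ℚ) ^ s) :=
      ih hT' N (dvd_trans (by rw [hprod]; exact Dvd.intro_left _ rfl) hdvd)
    have hmul : ((F.filter (fun m => Q ∣ m)).card : ℚ)
        = (N / Q : ℚ) * ∏ p ∈ T, (1 - 1 / (p : ℚ) ^ s) := by
      rw [hbij, ih hT' (N / Q) hTdvd, Nat.cast_div hQdvdN (by exact_mod_cast hQpos.ne')]
    have hle : (F.filter (fun m => Q ∣ m)).card ≤ F.card :=
      Finset.card_le_card (Finset.filter_subset _ _)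
    have : ((F.filter (fun m => ¬ Q ∣ m)).card : ℚ) = F.card - (F.filter (fun m => Q ∣ m)).card := by
      have := hsplit
      push_cast [← this]
      ring
    rw [hset, this, hFcard, hmul, Finset.prod_insert hq]
    have hQcast : ((Q : ℚ)) = (q : ℚ) ^ s := by push_cast [hQdef]; ring
    rw [hQcast]
    have hq0 : ((q : ℚ)) ^ s ≠ 0 := pow_ne_zero s (by exact_mod_cast hqp.pos.ne')
    field_simp

lemma prod_primes_pow_dvd (s n : ℕ) (T : Finset ℕ) :
    (∀ p ∈ T, p.Prime) → (∀ p ∈ T, p ^ s ∣ n) → (∏ p ∈ T, p ^ s) ∣ n := by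
  classical
  induction T using Finset.induction_on with
  | empty => simp
  | @insert q T hq ih =>
    intro hprime hdvd
    rw [Finset.prod_insert hq]
    have hqp : q.Prime := hprime q (Finset.mem_insert_self q T)
    have hcop : Nat.Coprime (q ^ s) (∏ p ∈ T, p ^ s) := by
      apply Nat.Coprime.prod_right
      intro p hp
      have hpp := hprime p (Finset.mem_insert_of_mem hp)
      have hne : q ≠ p := by rintro rfl; exact hq hp
      exact Nat.Coprime.pow s s ((Nat.coprime_primes hqp hpp).mpr hne)
    exact Nat.Coprime.mul_dvd_of_dvd_of_dvd hcop
      (hdvd q (Finset.mem_insert_self q T))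
      (ih (fun p hp => hprime p (Finset.mem_insert_of_mem hp))
        (fun p hp => hdvd p (Finset.mem_insert_of_mem hp)))

theorem stmt_8 (n s : ℕ) (hn : 0 < n) (hs : 0 < s) :
    (klee s n : ℚ) =
      (n : ℚ) * ∏ p ∈ n.primeFactors.filter (fun p => p ^ s ∣ n), (1 - 1 / (p : ℚ) ^ s) := by
  classical
  set S := n.primeFactors.filter (fun p => p ^ s ∣ n) with hS
  have hSprime : ∀ p ∈ S, p.Prime := by
    intro p hp
    rw [hS, Finset.mem_filter] at hp
    exact Nat.prime_of_mem_primeFactors hp.1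
  -- the condition `sPowGcd s (gcd m n) = 1` is equivalent to avoiding all p^s, p ∈ S
  have hcond : ∀ m ∈ Finset.Icc 1 n,
      (sPowGcd s (Nat.gcd m n) = 1 ↔ ∀ p ∈ S, ¬ p ^ s ∣ m) := by
    intro m hm
    rw [Finset.mem_Icc] at hm
    set g := Nat.gcd m n with hg
    have hgpos : 0 < g := Nat.gcd_pos_of_pos_right m hn
    unfold sPowGcd
    constructor
    · intro h1 p hp hpm
      have hpp := hSprime p hp
      have hpn : p ^ s ∣ n := by
        rw [hS, Finset.mem_filter] at hp; exact hp.2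
      have hpg : p ^ s ∣ g := Nat.dvd_gcd hpm hpn
      have hplg : p ≤ g := le_trans (Nat.le_self_pow hs.ne' p) (Nat.le_of_dvd hgpos hpg)
      have hle : p ≤ Nat.findGreatest (fun l => l ^ s ∣ g) g :=
        Nat.le_findGreatest hplg hpg
      have : Nat.findGreatest (fun l => l ^ s ∣ g) g = 1 := by
        exact (pow_eq_one_iff.mp h1).resolve_right hs.ne'
      have hp2 := hpp.two_le
      omega
    · intro havoid
      have h1 : Nat.findGreatest (fun l => l ^ s ∣ g) g = 1 := by
        rw [Nat.findGreatest_eq_iff]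
        refine ⟨hgpos, fun _ => by simp, ?_⟩
        intro l hl1 hlg hdvd
        set p := l.minFac with hp
        have hpp : p.Prime := Nat.minFac_prime (by omega)
        have hpl : p ∣ l := Nat.minFac_dvd l
        have hpsg : p ^ s ∣ g := dvd_trans (pow_dvd_pow_of_dvd hpl s) hdvd
        have hpsn : p ^ s ∣ n := hpsg.trans (Nat.gcd_dvd_right m n)
        have hpsm : p ^ s ∣ m := hpsg.trans (Nat.gcd_dvd_left m n)
        have hpS : p ∈ S := by
          rw [hS, Finset.mem_filter, Nat.mem_primeFactors]
          exact ⟨⟨hpp, dvd_trans (dvd_pow_self p hs.ne') hpsn, hn.ne'⟩, hpsn⟩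
        exact havoid p hpS hpsm
      rw [h1, one_pow]
  have hfilter : (Finset.Icc 1 n).filter (fun m => sPowGcd s (Nat.gcd m n) = 1)
      = (Finset.Icc 1 n).filter (fun m => ∀ p ∈ S, ¬ p ^ s ∣ m) :=
    Finset.filter_congr hcond
  -- the product ∏ p ∈ S, p ^ s divides n
  have hprod_dvd : (∏ p ∈ S, p ^ s) ∣ n :=
    prod_primes_pow_dvd s n S hSprime
      (fun p hp => by rw [hS, Finset.mem_filter] at hp; exact hp.2)
  rw [klee, hfilter]
  exact count_avoid s hs S hSprime n hprod_dvd
end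

section
/- For all positive integers n and s, Σ_{d | n} Φ_s(d^s) = n^s, where the sum is over all positive divisors d of n. -/
/-- Abbreviation: the largest `l` with `l ^ s ∣ k`. -/
private def LL (s k : ℕ) : ℕ := Nat.findGreatest (fun l => l ^ s ∣ k) k

lemma LL_pos {s k : ℕ} (hk : 0 < k) : 0 < LL s k :=
  Nat.le_findGreatest hk (by simp)

lemma LL_dvd {s k : ℕ} (hk : 0 < k) : (LL s k) ^ s ∣ k :=
  Nat.findGreatest_spec (P := fun l => l ^ s ∣ k) (m := 1) hk (by simp)

lemma LL_max {s k : ℕ} (hs : 0 < s) (hk : 0 < k) {j : ℕ} (hj : j ^ s ∣ k) : j ≤ LL s k := by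
  rcases Nat.eq_zero_or_pos j with h | h
  · simp [h]
  · exact Nat.le_findGreatest (le_trans (Nat.le_self_pow hs.ne' j) (Nat.le_of_dvd hk hj)) hj

lemma LL_mul_pow {s d k : ℕ} (hs : 0 < s) (hd : 0 < d) (hk : 0 < k)
    (h1 : LL s k = 1) : LL s (d ^ s * k) = d := by
  have hdk : 0 < d ^ s * k := by positivity
  refine le_antisymm ?_ (LL_max hs hdk (Dvd.intro k rfl))
  set j := LL s (d ^ s * k) with hjdef
  have hjd : j ^ s ∣ d ^ s * k := LL_dvd hdk
  have hj0 : 0 < j := LL_pos hdk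
  have hjdvd : j ∣ d := by
    rw [← Nat.factorization_le_iff_dvd hj0.ne' hd.ne', Finsupp.le_def]
    intro p
    by_cases hp : p.Prime
    · have hle := (Nat.factorization_le_iff_dvd (pow_ne_zero s hj0.ne') hdk.ne').mpr hjd
      have hv : s * j.factorization p ≤ s * d.factorization p + k.factorization p := by
        have := hle p
        simpa [Nat.factorization_pow, Nat.factorization_mul (pow_ne_zero s hd.ne') hk.ne'] using this
      have hvk : k.factorization p < s := by
        by_contra h
        push_neg at h
        have hps : p ^ s ∣ k := (Nat.Prime.pow_dvd_iff_le_factorization hp hk.ne').mpr h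
        have := LL_max hs hk hps
        rw [h1] at this
        exact absurd this (by have := hp.two_le; omega)
      by_contra hlt
      push_neg at hlt
      have h2 : s * (d.factorization p + 1) ≤ s * j.factorization p := Nat.mul_le_mul_left s hlt
      rw [Nat.mul_add, Nat.mul_one] at h2
      omega
    · simp [Nat.factorization_eq_zero_of_not_prime _ hp]
  exact Nat.le_of_dvd hd hjdvd

theorem stmt_17 (n s : ℕ) (hn : 0 < n) (hs : 0 < s) :
    ∑ d ∈ n.divisors, klee s (d ^ s) = n ^ s := by
  have hN : 0 < n ^ s := pow_pos hn s
  have key : ∀ m ∈ Finset.Icc 1 (n ^ s), LL s (Nat.gcd m (n ^ s)) ∈ n.divisors := by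
    intro m hm
    rw [Finset.mem_Icc] at hm
    have hg : 0 < Nat.gcd m (n ^ s) := Nat.gcd_pos_of_pos_left _ hm.1
    have h1 : (LL s (Nat.gcd m (n ^ s))) ^ s ∣ n ^ s :=
      (LL_dvd hg).trans (Nat.gcd_dvd_right _ _)
    rw [Nat.mem_divisors]
    exact ⟨(Nat.pow_dvd_pow_iff hs.ne').mp h1, hn.ne'⟩
  have h1 : (Finset.Icc 1 (n ^ s)).card
      = ∑ d ∈ n.divisors,
        ((Finset.Icc 1 (n ^ s)).filter (fun m => LL s (Nat.gcd m (n ^ s)) = d)).card :=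
    Finset.card_eq_sum_card_fiberwise key
  have fib : ∀ d ∈ n.divisors,
      ((Finset.Icc 1 (n ^ s)).filter (fun m => LL s (Nat.gcd m (n ^ s)) = d)).card
        = klee s ((n / d) ^ s) := by
    intro d hd
    obtain ⟨hdn, -⟩ := Nat.mem_divisors.mp hd
    have hd0 : 0 < d := Nat.pos_of_dvd_of_pos hdn hn
    have hnd0 : 0 < n / d := Nat.div_pos (Nat.le_of_dvd hn hdn) hd0
    have hEq : d ^ s * (n / d) ^ s = n ^ s := by
      rw [← mul_pow, Nat.mul_div_cancel' hdn]
    have hD0 : 0 < d ^ s := pow_pos hd0 s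
    -- forward data about fiber elements
    have fdvd : ∀ m, m ∈ (Finset.Icc 1 (n ^ s)).filter
        (fun m => LL s (Nat.gcd m (n ^ s)) = d) → d ^ s ∣ m ∧ 1 ≤ m ∧ m ≤ n ^ s := by
      intro m hm
      rw [Finset.mem_filter, Finset.mem_Icc] at hm
      obtain ⟨⟨hm1, hm2⟩, hmL⟩ := hm
      have hg : 0 < Nat.gcd m (n ^ s) := Nat.gcd_pos_of_pos_left _ hm1
      have := LL_dvd (s := s) hg
      rw [hmL] at this
      exact ⟨this.trans (Nat.gcd_dvd_left _ _), hm1, hm2⟩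
    unfold klee
    apply Finset.card_bij' (fun m _ => m / d ^ s) (fun m' _ => d ^ s * m')
    · -- hi : image in target
      intro m hm
      obtain ⟨hdm, hm1, hm2⟩ := fdvd m hm
      rw [Finset.mem_filter, Finset.mem_Icc] at hm ⊢
      obtain ⟨⟨-, -⟩, hmL⟩ := hm
      have hq1 : 1 ≤ m / d ^ s := Nat.one_le_div_iff hD0 |>.mpr (Nat.le_of_dvd hm1 hdm)
      have hq2 : m / d ^ s ≤ (n / d) ^ s := by
        have : m / d ^ s ≤ n ^ s / d ^ s := Nat.div_le_div_right hm2
        rwa [← hEq, Nat.mul_div_cancel_left _ hD0] at this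
      refine ⟨⟨hq1, hq2⟩, ?_⟩
      -- gcd decomposition
      have hgcd : Nat.gcd m (n ^ s) = d ^ s * Nat.gcd (m / d ^ s) ((n / d) ^ s) := by
        conv_lhs => rw [← Nat.mul_div_cancel' hdm, ← hEq]
        exact Nat.gcd_mul_left _ _ _
      set k' := Nat.gcd (m / d ^ s) ((n / d) ^ s) with hk'def
      have hk'0 : 0 < k' := Nat.gcd_pos_of_pos_left _ hq1
      have hLk' : LL s k' = 1 := by
        refine le_antisymm ?_ (LL_pos hk'0)
        have hl : (d * LL s k') ^ s ∣ Nat.gcd m (n ^ s) := by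
          rw [hgcd, mul_pow]
          exact mul_dvd_mul_left _ (LL_dvd hk'0)
        have hg : 0 < Nat.gcd m (n ^ s) := Nat.gcd_pos_of_pos_left _ hm1
        have := LL_max hs hg hl
        rw [hmL] at this
        exact Nat.le_of_mul_le_mul_left (this.trans_eq (mul_one d).symm) hd0
      unfold sPowGcd
      rw [show Nat.findGreatest (fun l => l ^ s ∣ k') k' = LL s k' from rfl, hLk', one_pow]
    · -- hj
      intro m' hm'
      rw [Finset.mem_filter, Finset.mem_Icc] at hm'
      obtain ⟨⟨hm'1, hm'2⟩, hm'G⟩ := hm'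
      rw [Finset.mem_filter, Finset.mem_Icc]
      have hk'0 : 0 < Nat.gcd m' ((n / d) ^ s) := Nat.gcd_pos_of_pos_left _ hm'1
      have hLk' : LL s (Nat.gcd m' ((n / d) ^ s)) = 1 := by
        unfold sPowGcd at hm'G
        have := (pow_eq_one_iff.mp hm'G).resolve_right hs.ne'
        exact this
      refine ⟨⟨Nat.one_le_iff_ne_zero.mpr (by positivity), ?_⟩, ?_⟩
      · calc d ^ s * m' ≤ d ^ s * (n / d) ^ s := Nat.mul_le_mul_left _ hm'2
          _ = n ^ s := hEq
      · have : Nat.gcd (d ^ s * m') (n ^ s) = d ^ s * Nat.gcd m' ((n / d) ^ s) := by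
          rw [← hEq]
          exact Nat.gcd_mul_left _ _ _
        rw [this]
        exact LL_mul_pow hs hd0 hk'0 hLk'
    · -- left inverse
      intro m hm
      exact Nat.mul_div_cancel' (fdvd m hm).1
    · -- right inverse
      intro m' hm'
      exact Nat.mul_div_cancel_left _ hD0
  calc ∑ d ∈ n.divisors, klee s (d ^ s)
      = ∑ d ∈ n.divisors, klee s ((n / d) ^ s) := (Nat.sum_div_divisors n (fun d => klee s (d ^ s))).symm
    _ = (Finset.Icc 1 (n ^ s)).card := by rw [h1]; exact (Finset.sum_congr rfl fib).symm
    _ = n ^ s := by rw [Nat.card_Icc]; omega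
end

section
/- For all positive integers n and s, Φ_s(n) equals the number of elements a of the additive group ℤ/nℤ such that n divided by the additive order of a is s-free, i.e., Φ_s(n) = #{a ∈ ℤ/nℤ : n / ord(a) is s-free}, where ord(a) denotes the additive order of a (which always divides n). -/
def sFree (s a : ℕ) : Prop := ∀ l : ℕ, 1 < l → ¬ l ^ s ∣ a

lemma sPowGcd_eq_one_iff_s18 {s k : ℕ} (hs : 0 < s) (hk : 0 < k) :
    sPowGcd s k = 1 ↔ sFree s k := by
  unfold sPowGcd
  rw [pow_eq_one_iff_left hs.ne']
  have hPF : (Nat.findGreatest (fun l => l ^ s ∣ k) k) ^ s ∣ k :=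
    Nat.findGreatest_spec (P := fun l => l ^ s ∣ k) (m := 1) hk (by simp)
  have h1 : 1 ≤ Nat.findGreatest (fun l => l ^ s ∣ k) k :=
    Nat.le_findGreatest hk (by simp)
  constructor
  · intro h l hl hdvd
    have hle : l ≤ k := le_trans (Nat.le_self_pow hs.ne' l) (Nat.le_of_dvd hk hdvd)
    exact Nat.findGreatest_is_greatest (P := fun l => l ^ s ∣ k) (by omega) hle hdvd
  · intro h
    by_contra hne
    exact h _ (by omega) hPF

theorem stmt_18 (n s : ℕ) (hn : 0 < n) (hs : 0 < s) :
    klee s n = Nat.card {a : ZMod n // sFree s (n / addOrderOf a)} := by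
  classical
  haveI : NeZero n := ⟨hn.ne'⟩
  rw [Nat.card_eq_fintype_card, Fintype.card_subtype]
  unfold klee
  have key : ∀ a : ZMod n, n / addOrderOf a = Nat.gcd n a.val := by
    intro a
    conv_lhs => rw [← ZMod.natCast_rightInverse a]
    rw [ZMod.addOrderOf_coe _ hn.ne',
      Nat.div_div_self (Nat.gcd_dvd_left _ _) hn.ne']
  have hgcd : ∀ m : ℕ, Nat.gcd n ((m : ZMod n)).val = Nat.gcd m n := by
    intro m
    rw [ZMod.val_natCast, Nat.gcd_comm, Nat.gcd_comm m n, Nat.gcd_rec n m]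
  refine Finset.card_nbij' (fun m => ((m : ℕ) : ZMod n))
    (fun a => if a.val = 0 then n else a.val) ?_ ?_ ?_ ?_
  · intro m hm
    simp only [Finset.mem_coe, Finset.mem_filter, Finset.mem_Icc] at hm
    simp only [Finset.mem_coe, Finset.mem_filter, Finset.mem_univ, true_and]
    rw [key, hgcd]
    exact (sPowGcd_eq_one_iff_s18 hs (Nat.gcd_pos_of_pos_right m hn)).mp hm.2
  · intro a ha
    simp only [Finset.mem_coe, Finset.mem_filter, Finset.mem_univ, true_and] at ha
    rw [key] at ha
    simp only [Finset.mem_coe, Finset.mem_filter, Finset.mem_Icc]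
    have hv : a.val < n := ZMod.val_lt a
    by_cases h0 : a.val = 0
    · rw [if_pos h0]
      refine ⟨⟨hn, le_refl n⟩, ?_⟩
      rw [Nat.gcd_self]
      rw [h0, Nat.gcd_zero_right] at ha
      exact (sPowGcd_eq_one_iff_s18 hs hn).mpr ha
    · rw [if_neg h0]
      refine ⟨⟨Nat.pos_of_ne_zero h0, hv.le⟩, ?_⟩
      rw [Nat.gcd_comm]
      exact (sPowGcd_eq_one_iff_s18 hs (Nat.gcd_pos_of_pos_left _ hn)).mpr ha
  · intro m hm
    simp only [Finset.mem_coe, Finset.mem_filter, Finset.mem_Icc] at hm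
    dsimp only
    rw [ZMod.val_natCast]
    rcases eq_or_lt_of_le hm.1.2 with h | h
    · simp [h, Nat.mod_self]
    · rw [Nat.mod_eq_of_lt h, if_neg (by omega)]
  · intro a ha
    dsimp only
    by_cases h0 : a.val = 0
    · simp only [h0, if_pos rfl, ZMod.natCast_self]
      have := ZMod.natCast_rightInverse (n := n) a
      rw [h0] at this
      simpa using this
    · rw [if_neg h0]
      exact ZMod.natCast_rightInverse a
end
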